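/- arXiv:1104.0059 — 4 statements merged into one kernel-verified Lean document; each statement's English description precedes it below -/
import Mathlib

section
/- Let X = {X(t), t ∈ ℝ^d} be a stochastically continuous and proper random field with values in ℝ^m which is wide-sense operator-self-similar with time-variable scaling exponent E ∈ Q(ℝ^d), and let D ∈ M(ℝ^m) and the continuous function b_r(t) be such that {X(r^E t), t ∈ ℝ^d} ≡fdd {r^D X(t) + b_r(t), t ∈ ℝ^d} for all r > 0. Then X(0) = a almost surely for some constant vector a ∈ ℝ^m if and only if D ∈ Q(ℝ^m). In the latter case, defining b_0(t) ≡ a for all t ∈ ℝ^d, the function (r,t) ↦ b_r(t) is continuous on [0,∞)×ℝ^d. -/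
open MeasureTheory Filter Matrix Topology Set
open scoped ENNReal NNReal

/-- `mpow r A` is `r^A := exp((ln r) A)` for `r > 0` and a real square matrix `A`. -/
noncomputable def mpow {n : ℕ} (r : ℝ) (A : Matrix (Fin n) (Fin n) ℝ) :
    Matrix (Fin n) (Fin n) ℝ :=
  NormedSpace.exp (Real.log r • A)

/-- The set of (complex) eigenvalues of a real square matrix. -/
def matSpectrum {n : ℕ} (A : Matrix (Fin n) (Fin n) ℝ) : Set ℂ :=
  spectrum ℂ (A.map (Complex.ofReal))

/-- `QSet n` is `Q(ℝⁿ)`: matrices whose eigenvalues all have positive real part. -/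
def QSet (n : ℕ) : Set (Matrix (Fin n) (Fin n) ℝ) :=
  {A | ∀ μ ∈ matSpectrum A, 0 < μ.re}

/-- `MSet n` is `M(ℝⁿ)`: matrices whose eigenvalues all have nonnegative real part and
such that every eigenvalue with zero real part is a simple root of the minimal polynomial. -/
def MSet (n : ℕ) : Set (Matrix (Fin n) (Fin n) ℝ) :=
  {A | ∀ μ ∈ matSpectrum A, 0 ≤ μ.re ∧
    (μ.re = 0 → (minpoly ℂ (A.map (Complex.ofReal))).rootMultiplicity μ = 1)}

/-- Equality of all finite-dimensional distributions of two random fields. -/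
def IdentFDD {Ω T β : Type*} [MeasurableSpace Ω] [MeasurableSpace β]
    (P : Measure Ω) (Y Z : T → Ω → β) : Prop :=
  ∀ (k : ℕ) (t : Fin k → T),
    P.map (fun ω i => Y (t i) ω) = P.map (fun ω i => Z (t i) ω)

/-- Stochastic continuity: `X s → X t` in probability whenever `s → t`. -/
def StochContinuous {Ω : Type*} [MeasurableSpace Ω] (P : Measure Ω) {d m : ℕ}
    (X : (Fin d → ℝ) → Ω → (Fin m → ℝ)) : Prop :=
  ∀ (t : Fin d → ℝ), ∀ ε > (0 : ℝ),
    Tendsto (fun s => P {ω | ε ≤ dist (X s ω) (X t ω)}) (𝓝 t) (𝓝 0)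

/-- A distribution on `ℝ^m` is full if its support is not contained in any proper
hyperplane; equivalently, it does not give full mass to any hyperplane. -/
def IsFullMeasure {m : ℕ} (μ : Measure (Fin m → ℝ)) : Prop :=
  ∀ (y : Fin m → ℝ), y ≠ 0 → ∀ c : ℝ, μ {x | ∑ i, x i * y i = c} ≠ 1

/-- A random field is proper if the distribution of `X t` is full for every `t ≠ 0`. -/
def ProperField {Ω : Type*} [MeasurableSpace Ω] (P : Measure Ω) {d m : ℕ}
    (X : (Fin d → ℝ) → Ω → (Fin m → ℝ)) : Prop :=
  ∀ t : Fin d → ℝ, t ≠ 0 → IsFullMeasure (P.map (X t))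

/-- Wide-sense operator-self-similarity with time-variable scaling exponent `E`. -/
def WOSS {Ω : Type*} [MeasurableSpace Ω] (P : Measure Ω) {d m : ℕ}
    (X : (Fin d → ℝ) → Ω → (Fin m → ℝ)) (E : Matrix (Fin d) (Fin d) ℝ) : Prop :=
  ∀ r : ℝ, 0 < r → ∃ (B : Matrix (Fin m) (Fin m) ℝ) (a : (Fin d → ℝ) → (Fin m → ℝ)),
    IdentFDD P (fun t ω => X (mpow r E *ᵥ t) ω) (fun t ω => B *ᵥ X t ω + a t)

/-- The operator norm `max_{|x|=1} |Q x|` (Euclidean norms) of a matrix. -/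
noncomputable def opNorm {n m : ℕ} (Q : Matrix (Fin m) (Fin n) ℝ) : ℝ :=
  ‖LinearMap.toContinuousLinearMap (Matrix.toEuclideanLin Q)‖

/-- The Euclidean norm of a vector in `ℝ^n`. -/
noncomputable def euclNorm {n : ℕ} (v : Fin n → ℝ) : ℝ :=
  Real.sqrt (∑ i, v i ^ 2)

/-- `G_r`: invertible matrices `A` such that `{X(r^E t)} ≡fdd {A X(t) + b(t)}`
for some deterministic function `b : ℝ^d → ℝ^m`. -/
def GSet {Ω : Type*} [MeasurableSpace Ω] (P : Measure Ω) {d m : ℕ}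
    (X : (Fin d → ℝ) → Ω → (Fin m → ℝ)) (E : Matrix (Fin d) (Fin d) ℝ)
    (r : ℝ) : Set (Matrix (Fin m) (Fin m) ℝ) :=
  {A | IsUnit A ∧ ∃ b : (Fin d → ℝ) → (Fin m → ℝ),
    IdentFDD P (fun t ω => X (mpow r E *ᵥ t) ω) (fun t ω => A *ᵥ X t ω + b t)}

/-- `G = ⋃_{r>0} G_r`. -/
def GAll {Ω : Type*} [MeasurableSpace Ω] (P : Measure Ω) {d m : ℕ}
    (X : (Fin d → ℝ) → Ω → (Fin m → ℝ)) (E : Matrix (Fin d) (Fin d) ℝ) :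
    Set (Matrix (Fin m) (Fin m) ℝ) :=
  ⋃ r ∈ Set.Ioi (0 : ℝ), GSet P X E r

/-- A radial part `τ` under the operator `E`. -/
structure IsRadialPart {d : ℕ} (E : Matrix (Fin d) (Fin d) ℝ)
    (τ : (Fin d → ℝ) → ℝ) : Prop where
  continuous : Continuous τ
  nonneg : ∀ x, 0 ≤ τ x
  pos : ∀ x : Fin d → ℝ, x ≠ 0 → 0 < τ x
  map_zero : τ 0 = 0
  even : ∀ x, τ (-x) = τ x
  scaling : ∀ r : ℝ, 0 < r → ∀ x, τ (mpow r E *ᵥ x) = r * τ x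
  isCompact_sphere : IsCompact {x | τ x = 1}
  zero_not_mem : (0 : Fin d → ℝ) ∉ {x | τ x = 1}
  tendsto_atTop : ∀ M : ℝ, ∃ R : ℝ, ∀ x : Fin d → ℝ, R ≤ ‖x‖ → M ≤ τ x
  tendsto_zero : Tendsto τ (𝓝 0) (𝓝 0)

/-- `φ` is `E`-homogeneous: `φ(r^E x) = r φ(x)` for all `r > 0` and `x ≠ 0`. -/
def EHomogeneous {d : ℕ} (E : Matrix (Fin d) (Fin d) ℝ)
    (φ : (Fin d → ℝ) → ℝ) : Prop :=
  ∀ r : ℝ, 0 < r → ∀ x : Fin d → ℝ, x ≠ 0 → φ (mpow r E *ᵥ x) = r * φ x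

/-- `ψ` is `(β,E)`-admissible with respect to the radial part `τ`. -/
def Admissible {d : ℕ} (τ : (Fin d → ℝ) → ℝ) (β : ℝ)
    (ψ : (Fin d → ℝ) → ℝ) : Prop :=
  (∀ x : Fin d → ℝ, x ≠ 0 → 0 < ψ x) ∧
  ∀ A B : ℝ, 0 < A → A < B → ∃ C : ℝ, 0 < C ∧ ∀ y : Fin d → ℝ,
    A ≤ euclNorm y → euclNorm y ≤ B → ∀ x : Fin d → ℝ, τ x ≤ 1 →
      |ψ (x + y) - ψ y| ≤ C * τ x ^ β


/-! ### Auxiliary lemmas -/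

section AuxLinAlg

noncomputable def mulVecCLM {n : ℕ} (x : Fin n → ℂ) :
    Matrix (Fin n) (Fin n) ℂ →L[ℂ] (Fin n → ℂ) :=
  LinearMap.toContinuousLinearMap
    { toFun := fun M => M *ᵥ x
      map_add' := fun A B => Matrix.add_mulVec A B x
      map_smul' := fun c A => Matrix.smul_mulVec c A x }

@[simp] lemma mulVecCLM_apply {n : ℕ} (x : Fin n → ℂ) (M : Matrix (Fin n) (Fin n) ℂ) :
    mulVecCLM x M = M *ᵥ x := rfl

noncomputable def vecMulCLM {n : ℕ} (x : Fin n → ℂ) :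
    Matrix (Fin n) (Fin n) ℂ →L[ℂ] (Fin n → ℂ) :=
  LinearMap.toContinuousLinearMap
    { toFun := fun M => x ᵥ* M
      map_add' := fun A B => Matrix.vecMul_add A B x
      map_smul' := fun c A => by
        ext j; simp [Matrix.vecMul, dotProduct, Finset.mul_sum, mul_left_comm] }

@[simp] lemma vecMulCLM_apply {n : ℕ} (x : Fin n → ℂ) (M : Matrix (Fin n) (Fin n) ℂ) :
    vecMulCLM x M = x ᵥ* M := rfl

lemma matexp_summable {n : ℕ} (M : Matrix (Fin n) (Fin n) ℂ) :
    Summable fun k : ℕ => ((Nat.factorial k : ℂ))⁻¹ • M ^ k := by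
  letI : SeminormedRing (Matrix (Fin n) (Fin n) ℂ) := Matrix.linftyOpSemiNormedRing
  letI : NormedRing (Matrix (Fin n) (Fin n) ℂ) := Matrix.linftyOpNormedRing
  letI : NormedAlgebra ℂ (Matrix (Fin n) (Fin n) ℂ) := Matrix.linftyOpNormedAlgebra
  exact NormedSpace.expSeries_summable' M

lemma vecMul_exp {n : ℕ} (M : Matrix (Fin n) (Fin n) ℂ) (v : Fin n → ℂ) (μ : ℂ)
    (hv : v ᵥ* M = μ • v) :
    v ᵥ* (NormedSpace.exp M) = Complex.exp μ • v := by
  have hpow : ∀ k : ℕ, v ᵥ* (M ^ k) = μ ^ k • v := by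
    intro k
    induction k with
    | zero => simp [Matrix.vecMul_one]
    | succ k ih =>
      rw [pow_succ, ← Matrix.vecMul_vecMul, ih, Matrix.smul_vecMul, hv, smul_smul, pow_succ]
  have h1 : v ᵥ* (NormedSpace.exp M) = ∑' k : ℕ, ((Nat.factorial k : ℂ))⁻¹ • (v ᵥ* (M ^ k)) := by
    rw [NormedSpace.exp_eq_tsum ℂ]
    have := (vecMulCLM v).map_tsum (matexp_summable M)
    simpa using this
  rw [h1]
  have h2 : ∀ k : ℕ, ((Nat.factorial k : ℂ))⁻¹ • (v ᵥ* (M ^ k)) = (μ ^ k / (Nat.factorial k : ℂ)) • v := by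
    intro k; rw [hpow k, smul_smul, div_eq_inv_mul]
  simp_rw [h2]
  rw [Summable.tsum_smul_const (NormedSpace.expSeries_div_summable μ)]
  rw [Complex.exp_eq_exp_ℂ, NormedSpace.exp_eq_tsum_div]

lemma matexp_algebraMap {n : ℕ} (c : ℂ) :
    NormedSpace.exp ((algebraMap ℂ (Matrix (Fin n) (Fin n) ℂ)) c)
      = (algebraMap ℂ (Matrix (Fin n) (Fin n) ℂ)) (Complex.exp c) := by
  letI : SeminormedRing (Matrix (Fin n) (Fin n) ℂ) := Matrix.linftyOpSemiNormedRing
  letI : NormedRing (Matrix (Fin n) (Fin n) ℂ) := Matrix.linftyOpNormedRing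
  letI : NormedAlgebra ℂ (Matrix (Fin n) (Fin n) ℂ) := Matrix.linftyOpNormedAlgebra
  rw [Complex.exp_eq_exp_ℂ]
  exact (NormedSpace.algebraMap_exp_comm c).symm

lemma exp_rate {j : ℕ} {c : ℝ} (hc : 0 < c) :
    Tendsto (fun s : ℝ => Real.exp (s * (-c)) * s ^ j) atTop (𝓝 0) := by
  have h := (Real.tendsto_pow_mul_exp_neg_atTop_nhds_zero j).comp
    (Tendsto.const_mul_atTop hc tendsto_id)
  have h2 := h.const_mul (c ^ j)⁻¹
  rw [mul_zero] at h2
  refine h2.congr fun s => ?_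
  simp only [Function.comp_apply, id_eq, mul_pow]
  have hsc : s * -c = -(c * s) := by ring
  rw [hsc]
  field_simp

lemma tendsto_exp_smul_mulVec_zero {n : ℕ} (M : Matrix (Fin n) (Fin n) ℂ) (μ : ℂ)
    (hμ : μ.re < 0) (k : ℕ) (x : Fin n → ℂ)
    (hx : ((M - μ • 1) ^ k) *ᵥ x = 0) :
    Tendsto (fun s : ℝ => NormedSpace.exp ((s : ℂ) • M) *ᵥ x) atTop (𝓝 0) := by
  set N : Matrix (Fin n) (Fin n) ℂ := M - μ • 1 with hN
  have key : ∀ s : ℝ, NormedSpace.exp ((s : ℂ) • M) *ᵥ x =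
      Complex.exp (s * μ) •
        ∑ j ∈ Finset.range k, (((Nat.factorial j : ℂ))⁻¹ * (s : ℂ) ^ j) • (N ^ j *ᵥ x) := by
    intro s
    have hsplit : (s : ℂ) • M = (algebraMap ℂ (Matrix (Fin n) (Fin n) ℂ)) ((s : ℂ) * μ)
        + (s : ℂ) • N := by
      rw [Algebra.algebraMap_eq_smul_one, ← smul_smul, ← smul_add, hN, add_sub_cancel]
    have hcomm : Commute ((algebraMap ℂ (Matrix (Fin n) (Fin n) ℂ)) ((s : ℂ) * μ))
        ((s : ℂ) • N) := (Algebra.commutes _ _)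
    rw [hsplit, Matrix.exp_add_of_commute _ _ hcomm]
    rw [matexp_algebraMap, Algebra.algebraMap_eq_smul_one, smul_mul_assoc, one_mul,
      Matrix.smul_mulVec]
    congr 1
    have h1 : NormedSpace.exp ((s : ℂ) • N) *ᵥ x
        = ∑' j : ℕ, ((Nat.factorial j : ℂ))⁻¹ • (((s : ℂ) • N) ^ j *ᵥ x) := by
      rw [NormedSpace.exp_eq_tsum ℂ]
      have := (mulVecCLM x).map_tsum (matexp_summable ((s : ℂ) • N))
      simpa using this
    rw [h1]
    have h2 : ∀ j : ℕ, ((Nat.factorial j : ℂ))⁻¹ • (((s : ℂ) • N) ^ j *ᵥ x)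
        = (((Nat.factorial j : ℂ))⁻¹ * (s : ℂ) ^ j) • (N ^ j *ᵥ x) := by
      intro j
      rw [smul_pow, Matrix.smul_mulVec, smul_smul]
    simp_rw [h2]
    refine tsum_eq_sum fun j hj => ?_
    have hjk : k ≤ j := by simpa [Finset.mem_range, not_lt] using hj
    have : N ^ j *ᵥ x = 0 := by
      have : N ^ j = N ^ (j - k) * N ^ k := by rw [← pow_add]; congr 1; omega
      rw [this, ← Matrix.mulVec_mulVec, hx, Matrix.mulVec_zero]
    rw [this, smul_zero]
  have hb : ∀ s : ℝ, 0 ≤ s → ‖NormedSpace.exp ((s : ℂ) • M) *ᵥ x‖ ≤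
      Real.exp (s * μ.re) * ∑ j ∈ Finset.range k,
        ((Nat.factorial j : ℝ))⁻¹ * s ^ j * ‖N ^ j *ᵥ x‖ := by
    intro s hs
    rw [key s, norm_smul]
    have h3 : ‖Complex.exp ((s : ℂ) * μ)‖ = Real.exp (s * μ.re) := by
      rw [Complex.norm_exp]
      congr 1
      simp [Complex.mul_re]
    rw [h3]
    gcongr
    refine (norm_sum_le _ _).trans ?_
    refine Finset.sum_le_sum fun j _ => ?_
    rw [norm_smul, norm_mul, norm_inv, norm_pow]
    simp [abs_of_nonneg hs]
  have hg : Tendsto (fun s : ℝ => Real.exp (s * μ.re) * ∑ j ∈ Finset.range k,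
      ((Nat.factorial j : ℝ))⁻¹ * s ^ j * ‖N ^ j *ᵥ x‖) atTop (𝓝 0) := by
    have : ∀ s : ℝ, Real.exp (s * μ.re) * ∑ j ∈ Finset.range k,
        ((Nat.factorial j : ℝ))⁻¹ * s ^ j * ‖N ^ j *ᵥ x‖
        = ∑ j ∈ Finset.range k,
          ((Nat.factorial j : ℝ))⁻¹ * ‖N ^ j *ᵥ x‖ * (Real.exp (s * μ.re) * s ^ j) := by
      intro s; rw [Finset.mul_sum]; exact Finset.sum_congr rfl fun j _ => by ring
    simp_rw [this]
    have := tendsto_finset_sum (Finset.range k)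
      (fun j _ => ((exp_rate (j := j) (c := -μ.re) (by linarith))).const_mul
        (((Nat.factorial j : ℝ))⁻¹ * ‖N ^ j *ᵥ x‖))
    simpa using this
  exact squeeze_zero_norm' (by filter_upwards [eventually_ge_atTop (0:ℝ)] using hb) hg

lemma mem_spectrum_of_genEig {n : ℕ} {M : Matrix (Fin n) (Fin n) ℂ} {μ : ℂ} {k : ℕ}
    {x : Fin n → ℂ} (hx : ((M - μ • 1) ^ k) *ᵥ x = 0) (hx0 : x ≠ 0) :
    μ ∈ spectrum ℂ M := by
  have hk0 : k ≠ 0 := by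
    rintro rfl
    simp only [pow_zero, Matrix.one_mulVec] at hx
    exact hx0 hx
  have hdet : (M - μ • 1).det = 0 := by
    have h1 : ((M - μ • 1) ^ k).det = 0 :=
      (Matrix.exists_mulVec_eq_zero_iff).mp ⟨x, hx0, hx⟩
    rw [Matrix.det_pow] at h1
    exact pow_eq_zero_iff hk0 |>.mp h1
  rw [spectrum.mem_iff]
  intro hunit
  rw [Matrix.isUnit_iff_isUnit_det] at hunit
  have : (algebraMap ℂ (Matrix (Fin n) (Fin n) ℂ) μ - M) = -(M - μ • 1) := by
    rw [Algebra.algebraMap_eq_smul_one]; exact (neg_sub _ _).symm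
  rw [this, Matrix.det_neg, hdet, mul_zero] at hunit
  exact (not_isUnit_zero : ¬ IsUnit (0:ℂ)) hunit

lemma tendsto_exp_mulVec_zero {n : ℕ} (M : Matrix (Fin n) (Fin n) ℂ)
    (hM : ∀ μ ∈ spectrum ℂ M, μ.re < 0) (x : Fin n → ℂ) :
    Tendsto (fun s : ℝ => NormedSpace.exp ((s : ℂ) • M) *ᵥ x) atTop (𝓝 0) := by
  set S : Submodule ℂ (Fin n → ℂ) :=
    { carrier := {y | Tendsto (fun s : ℝ => NormedSpace.exp ((s : ℂ) • M) *ᵥ y) atTop (𝓝 0)}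
      add_mem' := by
        intro a b ha hb
        have := Tendsto.add ha hb
        simpa [Matrix.mulVec_add] using this
      zero_mem' := by simp [Matrix.mulVec_zero, tendsto_const_nhds]
      smul_mem' := by
        intro c a ha
        have := ha.const_smul c
        simpa [Matrix.mulVec_smul] using this } with hS
  suffices h : x ∈ S from h
  have htop := Module.End.iSup_maxGenEigenspace_eq_top
    (K := ℂ) (V := Fin n → ℂ) (Matrix.toLinAlgEquiv' M)
  have hle : ∀ μ : ℂ, Module.End.maxGenEigenspace (Matrix.toLinAlgEquiv' M) μ ≤ S := by
    intro μ y hy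
    rw [Module.End.mem_maxGenEigenspace] at hy
    obtain ⟨k, hk⟩ := hy
    have hmat : ∀ z : Fin n → ℂ,
        ((Matrix.toLinAlgEquiv' M - μ • 1) ^ k) z = ((M - μ • 1) ^ k) *ᵥ z := by
      intro z
      have : (Matrix.toLinAlgEquiv' M - μ • 1) ^ k
          = Matrix.toLinAlgEquiv' ((M - μ • 1) ^ k) := by
        rw [map_pow, map_sub, _root_.map_smul, _root_.map_one]
      rw [this, Matrix.toLinAlgEquiv'_apply]
    rw [hmat] at hk
    by_cases hy0 : y = 0
    · subst hy0; exact Submodule.zero_mem S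
    · have hμ : μ.re < 0 := hM μ (mem_spectrum_of_genEig hk hy0)
      exact tendsto_exp_smul_mulVec_zero M μ hμ k y hk
  have : (⊤ : Submodule ℂ (Fin n → ℂ)) ≤ S := by
    rw [← htop]
    exact iSup_le hle
  exact this Submodule.mem_top

lemma mpow_map_ofReal {n : ℕ} (r : ℝ) (A : Matrix (Fin n) (Fin n) ℝ) :
    (mpow r A).map Complex.ofReal
      = NormedSpace.exp (((Real.log r : ℝ) : ℂ) • A.map Complex.ofReal) := by
  letI : SeminormedRing (Matrix (Fin n) (Fin n) ℝ) := Matrix.linftyOpSemiNormedRing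
  letI : NormedRing (Matrix (Fin n) (Fin n) ℝ) := Matrix.linftyOpNormedRing
  letI : NormedAlgebra ℝ (Matrix (Fin n) (Fin n) ℝ) := Matrix.linftyOpNormedAlgebra
  letI : SeminormedRing (Matrix (Fin n) (Fin n) ℂ) := Matrix.linftyOpSemiNormedRing
  letI : NormedRing (Matrix (Fin n) (Fin n) ℂ) := Matrix.linftyOpNormedRing
  letI : NormedAlgebra ℝ (Matrix (Fin n) (Fin n) ℂ) := Matrix.linftyOpNormedAlgebra
  letI : NormedAlgebra ℂ (Matrix (Fin n) (Fin n) ℂ) := Matrix.linftyOpNormedAlgebra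
  letI : NormedAlgebra ℚ (Matrix (Fin n) (Fin n) ℝ) := Matrix.linftyOpNormedAlgebra
  letI : NormedAlgebra ℚ (Matrix (Fin n) (Fin n) ℂ) := Matrix.linftyOpNormedAlgebra
  have h1 : (mpow r A).map Complex.ofReal
      = NormedSpace.exp ((Real.log r • A).map Complex.ofReal) := by
    have hc : Continuous fun B : Matrix (Fin n) (Fin n) ℝ =>
        (Complex.ofRealHom.mapMatrix (m := Fin n)) B := by
      simp only [RingHom.mapMatrix_apply]
      exact Continuous.matrix_map continuous_id Complex.continuous_ofReal
    have := NormedSpace.map_exp (Complex.ofRealHom.mapMatrix (m := Fin n)) hc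
      (Real.log r • A)
    exact this
  have h2 : (Real.log r • A).map Complex.ofReal
      = ((Real.log r : ℝ) : ℂ) • A.map Complex.ofReal := by
    ext i j
    simp [Matrix.map_apply]
  rw [h1, h2]

lemma mpow_tendsto {n : ℕ} {A : Matrix (Fin n) (Fin n) ℝ} (hA : A ∈ QSet n) :
    Tendsto (fun r : ℝ => mpow r A) (𝓝[>] (0 : ℝ)) (𝓝 0) := by
  have hlog : Tendsto (fun r : ℝ => -Real.log r) (𝓝[>] (0 : ℝ)) atTop :=
    tendsto_neg_atBot_atTop.comp Real.tendsto_log_nhdsGT_zero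
  have hM : ∀ μ ∈ spectrum ℂ (-(A.map Complex.ofReal)), μ.re < 0 := by
    intro μ hμ
    rw [← spectrum.neg_eq, Set.mem_neg] at hμ
    have := hA (-μ) hμ
    simp only [Complex.neg_re] at this
    linarith
  refine tendsto_pi_nhds.mpr ?_
  intro i
  rw [tendsto_pi_nhds]
  intro j
  have h := tendsto_exp_mulVec_zero _ hM (Pi.single j 1)
  have h2 := ((Complex.continuous_re).tendsto 0).comp
    (((continuous_apply i).tendsto (0 : Fin n → ℂ)).comp (h.comp hlog))
  refine Tendsto.congr (fun r => ?_) h2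
  show (((NormedSpace.exp (((-Real.log r : ℝ) : ℂ) • -A.map Complex.ofReal))
      *ᵥ Pi.single j 1) i).re = mpow r A i j
  have he : (((-Real.log r : ℝ) : ℂ) • -A.map Complex.ofReal)
      = ((Real.log r : ℝ) : ℂ) • A.map Complex.ofReal := by
    simp
  rw [he, ← mpow_map_ofReal]
  simp [Matrix.map_apply]

noncomputable def entSum {n : ℕ} (M : Matrix (Fin n) (Fin n) ℝ) : ℝ :=
  ∑ i, ∑ j, |M i j|

lemma entSum_nonneg {n : ℕ} (M : Matrix (Fin n) (Fin n) ℝ) : 0 ≤ entSum M :=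
  Finset.sum_nonneg fun _ _ => Finset.sum_nonneg fun _ _ => abs_nonneg _

lemma continuous_entSum {n : ℕ} : Continuous (entSum (n := n)) := by
  unfold entSum
  refine continuous_finset_sum _ fun i _ => continuous_finset_sum _ fun j _ => ?_
  exact (((continuous_apply j).comp (continuous_apply i))).abs

@[simp] lemma entSum_zero {n : ℕ} : entSum (0 : Matrix (Fin n) (Fin n) ℝ) = 0 := by
  simp [entSum]

lemma norm_mulVec_le {n : ℕ} (M : Matrix (Fin n) (Fin n) ℝ) (v : Fin n → ℝ) :
    ‖M *ᵥ v‖ ≤ entSum M * ‖v‖ := by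
  have hnn : 0 ≤ entSum M * ‖v‖ := mul_nonneg (entSum_nonneg M) (norm_nonneg v)
  rw [pi_norm_le_iff_of_nonneg hnn]
  intro i
  calc ‖(M *ᵥ v) i‖ = ‖∑ j, M i j * v j‖ := rfl
    _ ≤ ∑ j, ‖M i j * v j‖ := norm_sum_le _ _
    _ ≤ ∑ j, |M i j| * ‖v‖ := by
        refine Finset.sum_le_sum fun j _ => ?_
        rw [norm_mul, Real.norm_eq_abs]
        exact mul_le_mul_of_nonneg_left (norm_le_pi_norm v j) (abs_nonneg _)
    _ = (∑ j, |M i j|) * ‖v‖ := by rw [Finset.sum_mul]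
    _ ≤ entSum M * ‖v‖ := by
        refine mul_le_mul_of_nonneg_right ?_ (norm_nonneg v)
        exact Finset.single_le_sum (f := fun i => ∑ j, |M i j|)
          (fun i _ => Finset.sum_nonneg fun j _ => abs_nonneg _) (Finset.mem_univ i)

lemma tendsto_mulVec_zero' {n : ℕ} {ι : Type*} {l : Filter ι}
    {Mf : ι → Matrix (Fin n) (Fin n) ℝ} {vf : ι → Fin n → ℝ} {v₀ : Fin n → ℝ}
    (hM : Tendsto (fun i => entSum (Mf i)) l (𝓝 0)) (hv : Tendsto vf l (𝓝 v₀)) :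
    Tendsto (fun i => Mf i *ᵥ vf i) l (𝓝 0) := by
  refine squeeze_zero_norm (fun i => norm_mulVec_le _ _) ?_
  have := hM.mul hv.norm
  simpa using this

lemma entSum_mpow_tendsto {n : ℕ} {A : Matrix (Fin n) (Fin n) ℝ} (hA : A ∈ QSet n)
    {ι : Type*} {l : Filter ι} {rf : ι → ℝ} (hr : Tendsto rf l (𝓝[>] (0:ℝ))) :
    Tendsto (fun i => entSum (mpow (rf i) A)) l (𝓝 0) := by
  have h1 := (mpow_tendsto hA).comp hr
  have h2 := (continuous_entSum.tendsto _).comp h1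
  simpa [Function.comp_def] using h2

lemma exists_left_eigvec {m : ℕ} {D : Matrix (Fin m) (Fin m) ℝ} {μ : ℂ}
    (hμ : μ ∈ matSpectrum D) :
    ∃ v : Fin m → ℂ, v ≠ 0 ∧ v ᵥ* (D.map Complex.ofReal) = μ • v := by
  set Dc := D.map Complex.ofReal with hDc
  rw [matSpectrum, spectrum.mem_iff] at hμ
  have hdet : (algebraMap ℂ (Matrix (Fin m) (Fin m) ℂ) μ - Dc).det = 0 := by
    by_contra h
    exact hμ ((Matrix.isUnit_iff_isUnit_det _).mpr (Ne.isUnit h))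
  have hdetT : (algebraMap ℂ (Matrix (Fin m) (Fin m) ℂ) μ - Dcᵀ).det = 0 := by
    have : (algebraMap ℂ (Matrix (Fin m) (Fin m) ℂ) μ - Dcᵀ)
        = (algebraMap ℂ (Matrix (Fin m) (Fin m) ℂ) μ - Dc)ᵀ := by
      rw [Matrix.transpose_sub, Algebra.algebraMap_eq_smul_one,
        Matrix.transpose_smul, Matrix.transpose_one]
    rw [this, Matrix.det_transpose]
    exact hdet
  obtain ⟨v, hv0, hv⟩ := (Matrix.exists_mulVec_eq_zero_iff).mpr hdetT
  refine ⟨v, hv0, ?_⟩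
  rw [Matrix.sub_mulVec, sub_eq_zero] at hv
  have h1 : algebraMap ℂ (Matrix (Fin m) (Fin m) ℂ) μ *ᵥ v = μ • v := by
    rw [Algebra.algebraMap_eq_smul_one, Matrix.smul_mulVec, Matrix.one_mulVec]
  rw [← Matrix.mulVec_transpose, ← hv, h1]

lemma vecMul_mpow_eq_self {m : ℕ} {D : Matrix (Fin m) (Fin m) ℝ} {μ : ℂ}
    {v : Fin m → ℂ} (hv : v ᵥ* (D.map Complex.ofReal) = μ • v) (r : ℝ)
    (hexp : Complex.exp ((Real.log r : ℂ) * μ) = 1) :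
    v ᵥ* (mpow r D).map Complex.ofReal = v := by
  rw [mpow_map_ofReal]
  have h1 : v ᵥ* (((Real.log r : ℝ) : ℂ) • D.map Complex.ofReal)
      = ((Real.log r : ℂ) * μ) • v := by
    ext j
    have hj := congrFun hv j
    simp only [Matrix.vecMul, dotProduct, Pi.smul_apply, smul_eq_mul] at hj
    simp only [Matrix.vecMul, dotProduct, Matrix.smul_apply, Pi.smul_apply,
      smul_eq_mul]
    calc ∑ x : Fin m, v x * ((Real.log r : ℂ) * D.map Complex.ofReal x j)
        = (Real.log r : ℂ) * ∑ x : Fin m, v x * D.map Complex.ofReal x j := by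
          rw [Finset.mul_sum]
          exact Finset.sum_congr rfl fun x _ => by ring
      _ = (Real.log r : ℂ) * (μ * v j) := by rw [hj]
      _ = (Real.log r : ℂ) * μ * v j := by ring
  rw [vecMul_exp _ _ _ h1, hexp, one_smul]

lemma real_eigvec_of_fixed {m : ℕ} {M : Matrix (Fin m) (Fin m) ℝ}
    {v : Fin m → ℂ} (hv : v ᵥ* M.map Complex.ofReal = v) :
    ((fun i => (v i).re) ᵥ* M = fun i => (v i).re)
      ∧ ((fun i => (v i).im) ᵥ* M = fun i => (v i).im) := by
  have key : ∀ j, (∑ i, (v i).re * M i j = (v j).re) ∧ (∑ i, (v i).im * M i j = (v j).im) := by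
    intro j
    have h := congrFun hv j
    simp only [Matrix.vecMul, dotProduct, Matrix.map_apply] at h
    have hre := congrArg Complex.re h
    have him := congrArg Complex.im h
    rw [Complex.re_sum] at hre
    rw [Complex.im_sum] at him
    simp only [Complex.mul_re, Complex.mul_im, Complex.ofReal_re,
      Complex.ofReal_im, mul_zero, zero_mul, sub_zero, add_zero, zero_add] at hre him
    exact ⟨hre, him⟩
  constructor
  · funext j
    simpa [Matrix.vecMul, dotProduct] using (key j).1
  · funext j
    simpa [Matrix.vecMul, dotProduct] using (key j).2

lemma exists_seq_exp_one (μ : ℂ) (hre : μ.re = 0) :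
    ∃ r : ℕ → ℝ, Tendsto r atTop (𝓝[>] (0:ℝ)) ∧ (∀ n, 0 < r n) ∧
      ∀ n : ℕ, Complex.exp ((Real.log (r n) : ℂ) * μ) = 1 := by
  set θ := μ.im with hθdef
  set c : ℝ := if θ = 0 then 1 else |θ| with hcdef
  have hc : 0 < c := by
    by_cases h : θ = 0 <;> simp [hcdef, h, abs_pos]
  refine ⟨fun n => Real.exp (-(2 * Real.pi * (n+1)) / c), ?_, fun n => Real.exp_pos _, ?_⟩
  · rw [tendsto_nhdsWithin_iff]
    constructor
    · have h1 : Tendsto (fun n : ℕ => ((n:ℝ)+1)) atTop atTop :=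
        tendsto_atTop_add_const_right _ 1 tendsto_natCast_atTop_atTop
      have h2 : Tendsto (fun n : ℕ => (2 * Real.pi / c) * ((n:ℝ)+1)) atTop atTop :=
        h1.const_mul_atTop (by positivity)
      have h3 : Tendsto (fun n : ℕ => -(2 * Real.pi * ((n:ℝ)+1)) / c) atTop atBot := by
        have := tendsto_neg_atTop_atBot.comp h2
        refine this.congr fun n => ?_
        simp only [Function.comp_apply]
        ring
      exact Real.tendsto_exp_atBot.comp h3
    · exact Filter.Eventually.of_forall fun n => Set.mem_Ioi.mpr (Real.exp_pos _)
  · intro n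
    rw [Real.log_exp]
    by_cases hθ : θ = 0
    · have hμ0 : μ = 0 := Complex.ext hre hθ
      rw [hμ0, mul_zero, Complex.exp_zero]
    · have hμI : μ = (θ:ℂ) * Complex.I := by
        apply Complex.ext <;> simp [hre, hθdef]
      set k : ℤ := if 0 ≤ θ then -(n+1 : ℤ) else (n+1 : ℤ) with hkdef
      have hreal : (-(2 * Real.pi * (n+1)) / c) * θ = (k:ℝ) * (2 * Real.pi) := by
        rw [hcdef, if_neg hθ]
        by_cases hθpos : 0 ≤ θ
        · rw [abs_of_nonneg hθpos, hkdef, if_pos hθpos]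
          have hθ0 : θ ≠ 0 := hθ
          push_cast
          field_simp
        · rw [abs_of_neg (not_le.mp hθpos), hkdef, if_neg hθpos]
          have hθ0 : θ ≠ 0 := hθ
          push_cast
          field_simp
      have : ((-(2 * Real.pi * (n+1)) / c : ℝ) : ℂ) * μ = (k : ℂ) * (2 * Real.pi * Complex.I) := by
        rw [hμI]
        have := congrArg (fun x : ℝ => (x : ℂ)) hreal
        push_cast at this ⊢
        rw [← mul_assoc, this]
        ring
      rw [this, Complex.exp_int_mul_two_pi_mul_I]

end AuxLinAlg

section AuxProb
variable {Ω : Type*} [MeasurableSpace Ω] (P : Measure Ω) [IsProbabilityMeasure P]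

lemma concentrate {β : Type*} [NormedAddCommGroup β] [CompleteSpace β]
    (W : Ω → β) (c : ℕ → β)
    (hconc : ∀ ε > (0:ℝ), Tendsto (fun n => P {ω | ε ≤ dist (W ω) (c n)}) atTop (𝓝 0)) :
    ∃ v : β, Tendsto c atTop (𝓝 v) ∧ ∀ᵐ ω ∂P, W ω = v := by
  have hhalf : ∀ ε > (0:ℝ), ∀ᶠ n in atTop, P {ω | ε ≤ dist (W ω) (c n)} < 1/2 := by
    intro ε hε
    exact (hconc ε hε).eventually_lt_const (by norm_num)
  have hcauchy : CauchySeq c := by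
    rw [Metric.cauchySeq_iff']
    intro ε hε
    obtain ⟨N, hN⟩ := (hhalf (ε/2) (by linarith)).exists_forall_of_atTop
    refine ⟨N, fun n hn => ?_⟩
    by_contra hcon
    push_neg at hcon
    have hcover : {ω | ε/2 ≤ dist (W ω) (c n)} ∪ {ω | ε/2 ≤ dist (W ω) (c N)} = univ := by
      ext ω
      simp only [Set.mem_union, Set.mem_setOf_eq, Set.mem_univ, iff_true]
      by_contra hc
      push_neg at hc
      have := dist_triangle (c n) (W ω) (c N)
      rw [dist_comm (c n) (W ω)] at this
      have : dist (c n) (c N) < ε := by linarith [hc.1, hc.2]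
      linarith
    have h1 : (1:ℝ≥0∞) = P univ := (measure_univ).symm
    have h2 : P univ ≤ P {ω | ε/2 ≤ dist (W ω) (c n)} + P {ω | ε/2 ≤ dist (W ω) (c N)} :=
      hcover ▸ measure_union_le _ _
    have h3 : P {ω | ε/2 ≤ dist (W ω) (c n)} + P {ω | ε/2 ≤ dist (W ω) (c N)}
        < 1/2 + 1/2 := ENNReal.add_lt_add (hN n hn) (hN N le_rfl)
    rw [ENNReal.add_halves] at h3
    exact absurd (h1 ▸ h2) (not_le.mpr h3)
  obtain ⟨v, hv⟩ := cauchySeq_tendsto_of_complete hcauchy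
  refine ⟨v, hv, ?_⟩
  have hzero : ∀ ε : ℝ, 0 < ε → P {ω | ε ≤ dist (W ω) v} = 0 := by
    intro ε hε
    have hev : ∀ᶠ n in atTop, P {ω | ε ≤ dist (W ω) v} ≤
        P {ω | ε/2 ≤ dist (W ω) (c n)} := by
      have hcn : ∀ᶠ n in atTop, dist (c n) v < ε/2 :=
        (hv.eventually (Metric.ball_mem_nhds v (by linarith : (0:ℝ) < ε/2)))
      filter_upwards [hcn] with n hn
      refine measure_mono fun ω hω => ?_
      simp only [Set.mem_setOf_eq] at hω ⊢
      have := dist_triangle (W ω) (c n) v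
      have hn' : dist (c n) v < ε/2 := hn
      linarith
    exact le_antisymm (ge_of_tendsto (hconc (ε/2) (by linarith)) hev) zero_le
  rw [ae_iff]
  refine measure_mono_null (fun ω hω => ?_) (measure_iUnion_null fun n : ℕ =>
    hzero (1/(n+1)) (by positivity))
  simp only [Set.mem_setOf_eq] at hω
  have hd : 0 < dist (W ω) v := dist_pos.mpr hω
  obtain ⟨n, hn⟩ := exists_nat_one_div_lt hd
  exact Set.mem_iUnion.mpr ⟨n, hn.le⟩

lemma conv_of_laws {m : ℕ} {ι : Type*} (l : Filter ι)
    (Y : ι → Ω → (Fin m → ℝ)) (Z : ι → Ω → (Fin m → ℝ)) (c : ι → Fin m → ℝ)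
    (a : Fin m → ℝ)
    (hmeasY : ∀ i, Measurable (Y i)) (hmeasZ : ∀ i, Measurable (Z i))
    (hlaw : ∀ᶠ i in l, P.map (Y i) = P.map (fun ω => Z i ω + c i))
    (hY : ∀ ε > (0:ℝ), Tendsto (fun i => P {ω | ε ≤ dist (Y i ω) a}) l (𝓝 0))
    (hZ : ∀ ε > (0:ℝ), Tendsto (fun i => P {ω | ε ≤ dist (Z i ω) 0}) l (𝓝 0)) :
    Tendsto c l (𝓝 a) := by
  rw [Metric.tendsto_nhds]
  intro ε hε
  have h1 := (hY (ε/3) (by linarith)).eventually_lt_const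
    (show (0:ℝ≥0∞) < 1/2 by norm_num)
  have h2 := (hZ (ε/3) (by linarith)).eventually_lt_const
    (show (0:ℝ≥0∞) < 1/2 by norm_num)
  filter_upwards [h1, h2, hlaw] with i hi1 hi2 hilaw
  by_contra hcon
  push_neg at hcon
  have hset : MeasurableSet {x : Fin m → ℝ | ε/3 ≤ dist x a} :=
    measurableSet_le measurable_const (measurable_id.dist measurable_const)
  have htrans : P {ω | ε/3 ≤ dist (Y i ω) a} = P {ω | ε/3 ≤ dist (Z i ω + c i) a} := by
    have e1 : P {ω | ε/3 ≤ dist (Y i ω) a}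
        = P.map (Y i) {x | ε/3 ≤ dist x a} := by
      rw [Measure.map_apply (hmeasY i) hset]; rfl
    have e2 : P {ω | ε/3 ≤ dist (Z i ω + c i) a}
        = P.map (fun ω => Z i ω + c i) {x | ε/3 ≤ dist x a} := by
      rw [Measure.map_apply ((hmeasZ i).add_const (c i)) hset]; rfl
    rw [e1, e2, hilaw]
  have hcover : {ω | ε/3 ≤ dist (Z i ω) 0} ∪ {ω | ε/3 ≤ dist (Z i ω + c i) a} = univ := by
    ext ω
    simp only [Set.mem_union, Set.mem_setOf_eq, Set.mem_univ, iff_true]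
    by_contra hc
    push_neg at hc
    obtain ⟨hc1, hc2⟩ := hc
    rw [dist_zero_right] at hc1
    have h4 : dist (c i) a ≤ dist (Z i ω + c i) a + ‖Z i ω‖ := by
      have := dist_triangle (c i) (Z i ω + c i) a
      have he : dist (c i) (Z i ω + c i) = ‖Z i ω‖ := by
        rw [dist_comm, dist_eq_norm, add_sub_cancel_right]
      linarith [this, he.le]
    have : dist (c i) a < ε := by linarith
    exact absurd this (not_lt.mpr hcon)
  have h5 : (1:ℝ≥0∞) ≤ P {ω | ε/3 ≤ dist (Z i ω) 0} + P {ω | ε/3 ≤ dist (Z i ω + c i) a} := by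
    calc (1:ℝ≥0∞) = P univ := measure_univ.symm
      _ ≤ _ := hcover ▸ measure_union_le _ _
  rw [← htrans] at h5
  have h6 : P {ω | ε/3 ≤ dist (Z i ω) 0} + P {ω | ε/3 ≤ dist (Y i ω) a}
      < 1/2 + 1/2 := ENNReal.add_lt_add hi2 hi1
  rw [ENNReal.add_halves] at h6
  exact absurd h5 (not_le.mpr h6)

lemma smallmat_prob {m : ℕ} {ι : Type*} (l : Filter ι)
    (Mf : ι → Matrix (Fin m) (Fin m) ℝ)
    (hM : Tendsto (fun i => entSum (Mf i)) l (𝓝 0))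
    (V : ι → Ω → Fin m → ℝ) (W : Ω → Fin m → ℝ) (hW : Measurable W)
    (htight : Tendsto (fun i => P {ω | (1:ℝ) ≤ dist (V i ω) (W ω)}) l (𝓝 0)) :
    ∀ ε > (0:ℝ), Tendsto (fun i => P {ω | ε ≤ dist (Mf i *ᵥ V i ω) 0}) l (𝓝 0) := by
  intro ε hε
  rw [ENNReal.tendsto_nhds_zero]
  intro δ hδ
  have hδ2 : (0:ℝ≥0∞) < δ/2 := ENNReal.half_pos hδ.ne'
  have hK : ∃ K : ℕ, P {ω | (K:ℝ) ≤ ‖W ω‖} ≤ δ/2 := by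
    have hmeas : ∀ K : ℕ, NullMeasurableSet {ω | (K:ℝ) ≤ ‖W ω‖} P :=
      fun K => (measurableSet_le measurable_const hW.norm).nullMeasurableSet
    have hanti : Antitone fun K : ℕ => {ω | (K:ℝ) ≤ ‖W ω‖} := by
      intro K L hKL ω hω
      simp only [Set.mem_setOf_eq] at hω ⊢
      exact le_trans (by exact_mod_cast Nat.cast_le.mpr hKL) hω
    have hfin : ∃ K : ℕ, P {ω | (K:ℝ) ≤ ‖W ω‖} ≠ ∞ := ⟨0, measure_ne_top _ _⟩
    have hiInter : ⋂ K : ℕ, {ω | (K:ℝ) ≤ ‖W ω‖} = ∅ := by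
      ext ω
      simp only [Set.mem_iInter, Set.mem_setOf_eq, Set.mem_empty_iff_false, iff_false]
      push_neg
      obtain ⟨K, hK⟩ := exists_nat_gt ‖W ω‖
      exact ⟨K, hK⟩
    have := tendsto_measure_iInter_atTop hmeas hanti hfin
    rw [hiInter, measure_empty] at this
    exact ((this.eventually_le_const hδ2).exists)
  obtain ⟨K, hKbound⟩ := hK
  have h1 : ∀ᶠ i in l, entSum (Mf i) * ((K:ℝ)+1) < ε := by
    have := hM.eventually_lt_const (show (0:ℝ) < ε/((K:ℝ)+1) by positivity)
    filter_upwards [this] with i hi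
    calc entSum (Mf i) * ((K:ℝ)+1) < (ε/((K:ℝ)+1)) * ((K:ℝ)+1) := by
          apply mul_lt_mul_of_pos_right hi; positivity
      _ = ε := by field_simp
  have h2 : ∀ᶠ i in l, P {ω | (1:ℝ) ≤ dist (V i ω) (W ω)} ≤ δ/2 :=
    htight.eventually_le_const hδ2
  filter_upwards [h1, h2] with i hi1 hi2
  have hsub : {ω | ε ≤ dist (Mf i *ᵥ V i ω) 0} ⊆
      {ω | (1:ℝ) ≤ dist (V i ω) (W ω)} ∪ {ω | (K:ℝ) ≤ ‖W ω‖} := by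
    intro ω hω
    simp only [Set.mem_setOf_eq] at hω
    by_contra hc
    simp only [Set.mem_union, Set.mem_setOf_eq] at hc
    push_neg at hc
    obtain ⟨hc1, hc2⟩ := hc
    have hV : ‖V i ω‖ ≤ (K:ℝ) + 1 := by
      have : ‖V i ω‖ ≤ ‖W ω‖ + dist (V i ω) (W ω) := by
        rw [dist_eq_norm]
        calc ‖V i ω‖ = ‖W ω + (V i ω - W ω)‖ := by ring_nf
          _ ≤ ‖W ω‖ + ‖V i ω - W ω‖ := norm_add_le _ _
      linarith
    have : dist (Mf i *ᵥ V i ω) 0 < ε := by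
      rw [dist_zero_right]
      calc ‖Mf i *ᵥ V i ω‖ ≤ entSum (Mf i) * ‖V i ω‖ := norm_mulVec_le _ _
        _ ≤ entSum (Mf i) * ((K:ℝ)+1) :=
            mul_le_mul_of_nonneg_left hV (entSum_nonneg _)
        _ < ε := hi1
    linarith
  calc P {ω | ε ≤ dist (Mf i *ᵥ V i ω) 0}
      ≤ P {ω | (1:ℝ) ≤ dist (V i ω) (W ω)} + P {ω | (K:ℝ) ≤ ‖W ω‖} :=
        le_trans (measure_mono hsub) (measure_union_le _ _)
    _ ≤ δ/2 + δ/2 := add_le_add hi2 hKbound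
    _ = δ := ENNReal.add_halves δ

end AuxProb

/-- **Theorem 2.1 (second part).** `X(0)` is a.s. constant iff `D ∈ Q(ℝ^m)`; in that
case, extending `b` by `b_0(t) ≡ a`, the shift is continuous on `[0,∞) × ℝ^d`. -/
theorem woss_const_at_zero_iff {d m : ℕ} (hd : 2 ≤ d) (hm : 2 ≤ m)
    {Ω : Type*} [MeasurableSpace Ω] (P : Measure Ω) [IsProbabilityMeasure P]
    (X : (Fin d → ℝ) → Ω → (Fin m → ℝ)) (hXmeas : ∀ t, Measurable (X t))
    (E : Matrix (Fin d) (Fin d) ℝ) (hE : E ∈ QSet d)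
    (hXc : StochContinuous P X) (hXp : ProperField P X)
    (hX : WOSS P X E)
    (D : Matrix (Fin m) (Fin m) ℝ) (hD : D ∈ MSet m)
    (b : ℝ → (Fin d → ℝ) → (Fin m → ℝ))
    (hbc : ∀ r : ℝ, 0 < r → ∀ t : Fin d → ℝ,
      ContinuousAt (fun p : ℝ × (Fin d → ℝ) => b p.1 p.2) (r, t))
    (hfdd : ∀ r : ℝ, 0 < r →
      IdentFDD P (fun t ω => X (mpow r E *ᵥ t) ω)
        (fun t ω => mpow r D *ᵥ X t ω + b r t)) :
    ((∃ a : Fin m → ℝ, ∀ᵐ ω ∂P, X 0 ω = a) ↔ D ∈ QSet m) ∧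
    (∀ a : Fin m → ℝ, D ∈ QSet m → (∀ᵐ ω ∂P, X 0 ω = a) →
      ContinuousOn (fun p : ℝ × (Fin d → ℝ) => if p.1 = 0 then a else b p.1 p.2)
        {p : ℝ × (Fin d → ℝ) | 0 ≤ p.1}) := by
  classical
  -- measurability of the affine images
  have hmeasaff : ∀ (M : Matrix (Fin m) (Fin m) ℝ) (c : Fin m → ℝ) (t : Fin d → ℝ),
      Measurable fun ω => M *ᵥ X t ω + c := by
    intro M c t
    have hcont : Continuous fun v : Fin m → ℝ => M *ᵥ v + c :=
      (continuous_const.matrix_mulVec continuous_id).add continuous_const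
    exact hcont.measurable.comp (hXmeas t)
  -- one-dimensional marginal law identity
  have law1 : ∀ r : ℝ, 0 < r → ∀ t : Fin d → ℝ,
      P.map (X (mpow r E *ᵥ t)) = P.map (fun ω => mpow r D *ᵥ X t ω + b r t) := by
    intro r hr t
    have h := hfdd r hr 1 (fun _ => t)
    have hg : Measurable fun v : Fin 1 → (Fin m → ℝ) => v 0 := measurable_pi_apply 0
    have hf1 : Measurable fun ω (_ : Fin 1) => X (mpow r E *ᵥ t) ω :=
      measurable_pi_lambda _ fun _ => hXmeas _
    have hf2 : Measurable fun ω (_ : Fin 1) => mpow r D *ᵥ X t ω + b r t :=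
      measurable_pi_lambda _ fun _ => hmeasaff _ _ _
    calc P.map (X (mpow r E *ᵥ t))
        = (P.map (fun ω (i : Fin 1) => X (mpow r E *ᵥ (fun _ : Fin 1 => t) i) ω)).map
            (fun v : Fin 1 → Fin m → ℝ => v 0) := (Measure.map_map hg hf1).symm
      _ = (P.map (fun ω (i : Fin 1) =>
            mpow r D *ᵥ X ((fun _ : Fin 1 => t) i) ω + b r ((fun _ : Fin 1 => t) i))).map
            (fun v : Fin 1 → Fin m → ℝ => v 0) := by rw [h]
      _ = P.map (fun ω => mpow r D *ᵥ X t ω + b r t) := Measure.map_map hg hf2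
  -- convergence in probability towards the value at 0
  have probXa : ∀ (a : Fin m → ℝ), (∀ᵐ ω ∂P, X 0 ω = a) →
      ∀ {ι : Type} (l : Filter ι) (g : ι → Fin d → ℝ), Tendsto g l (𝓝 0) →
      ∀ ε : ℝ, 0 < ε →
      Tendsto (fun i => P {ω | ε ≤ dist (X (g i) ω) a}) l (𝓝 0) := by
    intro a ha ι l g hg ε hε
    have h0 := (hXc 0 ε hε).comp hg
    refine Tendsto.congr (fun i => measure_congr ?_) h0
    rw [eventuallyEq_set]
    filter_upwards [ha] with ω h
    simp only [Set.mem_setOf_eq, h]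
  -- the backward implication, with control of the shifts
  have backward : D ∈ QSet m → ∃ a : Fin m → ℝ,
      Tendsto (fun n : ℕ => b (1/((n:ℝ)+1)) 0) atTop (𝓝 a) ∧ ∀ᵐ ω ∂P, X 0 ω = a := by
    intro hDQ
    set r : ℕ → ℝ := fun n => 1/((n:ℝ)+1) with hrdef
    have hrpos : ∀ n, 0 < r n := fun n => by positivity
    have hrt : Tendsto r atTop (𝓝[>] (0:ℝ)) := by
      rw [tendsto_nhdsWithin_iff]
      exact ⟨tendsto_one_div_add_atTop_nhds_zero_nat,
        Filter.Eventually.of_forall fun n => Set.mem_Ioi.mpr (hrpos n)⟩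
    have htight : Tendsto (fun _ : ℕ => P {ω | (1:ℝ) ≤ dist (X 0 ω) (X 0 ω)}) atTop (𝓝 0) := by
      have hz : ∀ n : ℕ, P {ω | (1:ℝ) ≤ dist (X 0 ω) (X 0 ω)} = 0 := by
        intro n
        convert measure_empty
        · ext ω; simp
        · infer_instance
      refine Tendsto.congr (fun n => (hz n).symm) tendsto_const_nhds
    have hZ := smallmat_prob P atTop (fun n => mpow (r n) D)
      (entSum_mpow_tendsto hDQ hrt) (fun _ => X 0) (X 0) (hXmeas 0) htight
    have hconc : ∀ ε > (0:ℝ),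
        Tendsto (fun n => P {ω | ε ≤ dist (X 0 ω) (b (r n) 0)}) atTop (𝓝 0) := by
      intro ε hε
      refine Tendsto.congr (fun n => ?_) (hZ ε hε)
      have hlaw := law1 (r n) (hrpos n) 0
      rw [Matrix.mulVec_zero] at hlaw
      have hS : MeasurableSet {x : Fin m → ℝ | ε ≤ dist x (b (r n) 0)} :=
        measurableSet_le measurable_const (measurable_id.dist measurable_const)
      have e1 : P {ω | ε ≤ dist (X 0 ω) (b (r n) 0)}
          = P.map (X 0) {x | ε ≤ dist x (b (r n) 0)} := by
        rw [Measure.map_apply (hXmeas 0) hS]; rfl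
      have e2 : P.map (fun ω => mpow (r n) D *ᵥ X 0 ω + b (r n) 0)
            {x | ε ≤ dist x (b (r n) 0)}
          = P {ω | ε ≤ dist (mpow (r n) D *ᵥ X 0 ω + b (r n) 0) (b (r n) 0)} := by
        rw [Measure.map_apply (hmeasaff _ _ _) hS]; rfl
      have e3 : ∀ zz : Fin m → ℝ, dist (zz + b (r n) 0) (b (r n) 0) = dist zz 0 := by
        intro zz
        have := dist_add_right zz 0 (b (r n) 0)
        simpa using this
      calc P {ω | ε ≤ dist (mpow (r n) D *ᵥ X 0 ω) 0}
          = P {ω | ε ≤ dist (mpow (r n) D *ᵥ X 0 ω + b (r n) 0) (b (r n) 0)} := by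
            refine congrArg P ?_
            ext ω
            simp only [Set.mem_setOf_eq, e3]
        _ = P.map (fun ω => mpow (r n) D *ᵥ X 0 ω + b (r n) 0)
              {x | ε ≤ dist x (b (r n) 0)} := e2.symm
        _ = P.map (X 0) {x | ε ≤ dist x (b (r n) 0)} := by rw [hlaw]
        _ = P {ω | ε ≤ dist (X 0 ω) (b (r n) 0)} := e1.symm
    obtain ⟨v, hvt, hva⟩ := concentrate P (X 0) (fun n => b (r n) 0) hconc
    exact ⟨v, hvt, hva⟩
  -- the forward implication
  have forward : (∃ a : Fin m → ℝ, ∀ᵐ ω ∂P, X 0 ω = a) → D ∈ QSet m := by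
    rintro ⟨a, ha⟩
    by_contra hDQ
    have hex : ∃ μ ∈ matSpectrum D, μ.re = 0 := by
      simp only [QSet, Set.mem_setOf_eq, not_forall] at hDQ
      obtain ⟨μ, hμ, hre⟩ := hDQ
      exact ⟨μ, hμ, le_antisymm (not_lt.mp hre) (hD μ hμ).1⟩
    obtain ⟨μ, hμmem, hμre⟩ := hex
    obtain ⟨v, hv0, hveig⟩ := exists_left_eigvec hμmem
    obtain ⟨r, hrt, hrpos, hexp⟩ := exists_seq_exp_one μ hμre
    have hvfix : ∀ n, v ᵥ* (mpow (r n) D).map Complex.ofReal = v :=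
      fun n => vecMul_mpow_eq_self hveig (r n) (hexp n)
    obtain ⟨y, hy0, hyfix⟩ : ∃ y : Fin m → ℝ, y ≠ 0 ∧ ∀ n, y ᵥ* mpow (r n) D = y := by
      by_cases hre0 : (fun i => (v i).re) = (0 : Fin m → ℝ)
      · refine ⟨fun i => (v i).im, ?_, fun n => (real_eigvec_of_fixed (hvfix n)).2⟩
        intro h
        apply hv0
        funext i
        have h1 := congrFun hre0 i
        have h2 := congrFun h i
        exact Complex.ext h1 h2
      · exact ⟨fun i => (v i).re, hre0, fun n => (real_eigvec_of_fixed (hvfix n)).1⟩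
    have hd0 : 0 < d := by omega
    set i₀ : Fin d := ⟨0, hd0⟩
    set t₀ : Fin d → ℝ := Pi.single i₀ 1 with ht₀def
    have ht₀ : t₀ ≠ 0 := by
      intro h
      have := congrFun h i₀
      simp [ht₀def, Pi.single_eq_same] at this
    -- the linear functional
    set φ : (Fin m → ℝ) → ℝ := fun x => ∑ i, x i * y i with hφdef
    have measφ : Measurable φ :=
      Finset.measurable_sum Finset.univ fun i _ => (measurable_pi_apply i).mul measurable_const
    set Cy : ℝ := ∑ i, |y i| with hCydef
    have hCy : 0 < Cy := by
      obtain ⟨i, hi⟩ := Function.ne_iff.mp hy0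
      exact Finset.sum_pos' (fun j _ => abs_nonneg _)
        ⟨i, Finset.mem_univ i, abs_pos.mpr hi⟩
    have hφdiff : ∀ x z : Fin m → ℝ, dist (φ x) (φ z) ≤ Cy * dist x z := by
      intro x z
      rw [Real.dist_eq]
      have hsub : φ x - φ z = ∑ i, (x i - z i) * y i := by
        rw [hφdef]
        simp only
        rw [← Finset.sum_sub_distrib]
        exact Finset.sum_congr rfl fun i _ => (sub_mul _ _ _).symm
      calc |φ x - φ z| = |∑ i, (x i - z i) * y i| := by rw [hsub]
        _ ≤ ∑ i, |(x i - z i) * y i| := Finset.abs_sum_le_sum_abs _ _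
        _ ≤ ∑ i, dist x z * |y i| := by
            refine Finset.sum_le_sum fun i _ => ?_
            rw [abs_mul]
            refine mul_le_mul_of_nonneg_right ?_ (abs_nonneg _)
            rw [← Real.dist_eq]
            exact dist_le_pi_dist x z i
        _ = Cy * dist x z := by rw [← Finset.mul_sum, hCydef]; ring
    have hφinv : ∀ (n : ℕ) (z w : Fin m → ℝ),
        φ (mpow (r n) D *ᵥ z + w) = φ z + φ w := by
      intro n z w
      have h1 : ∀ u : Fin m → ℝ, φ u = u ⬝ᵥ y := fun u => rfl
      rw [h1, h1, h1, add_dotProduct]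
      congr 1
      calc (mpow (r n) D *ᵥ z) ⬝ᵥ y = y ⬝ᵥ (mpow (r n) D *ᵥ z) := dotProduct_comm _ _
        _ = (y ᵥ* mpow (r n) D) ⬝ᵥ z := Matrix.dotProduct_mulVec _ _ _
        _ = y ⬝ᵥ z := by rw [hyfix n]
        _ = z ⬝ᵥ y := dotProduct_comm _ _
    set g : ℕ → Fin d → ℝ := fun n => mpow (r n) E *ᵥ t₀ with hgdef
    have hg : Tendsto g atTop (𝓝 0) :=
      tendsto_mulVec_zero' (entSum_mpow_tendsto hE hrt) tendsto_const_nhds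
    set W : Ω → ℝ := fun ω => φ (X t₀ ω) with hWdef
    have Wmeas : Measurable W := measφ.comp (hXmeas t₀)
    have hlawφ : ∀ n : ℕ, P.map (fun ω => φ (X (g n) ω))
        = P.map (fun ω => W ω + φ (b (r n) t₀)) := by
      intro n
      have h0 := law1 (r n) (hrpos n) t₀
      have h1 := congrArg (fun Q : Measure (Fin m → ℝ) => Q.map φ) h0
      rw [Measure.map_map measφ (hXmeas _), Measure.map_map measφ (hmeasaff _ _ _)] at h1
      calc P.map (fun ω => φ (X (g n) ω))
          = P.map (φ ∘ X (mpow (r n) E *ᵥ t₀)) := rfl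
        _ = P.map (φ ∘ fun ω => mpow (r n) D *ᵥ X t₀ ω + b (r n) t₀) := h1
        _ = P.map (fun ω => W ω + φ (b (r n) t₀)) := by
            congr 1
            funext ω
            exact hφinv n (X t₀ ω) (b (r n) t₀)
    set cc : ℕ → ℝ := fun n => φ a - φ (b (r n) t₀) with hccdef
    have hconc : ∀ ε > (0:ℝ),
        Tendsto (fun n => P {ω | ε ≤ dist (W ω) (cc n)}) atTop (𝓝 0) := by
      intro ε hε
      have hkey : ∀ n, P {ω | ε ≤ dist (W ω) (cc n)}
          = P {ω | ε ≤ dist (φ (X (g n) ω)) (φ a)} := by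
        intro n
        have hS : MeasurableSet {x : ℝ | ε ≤ dist x (φ a)} :=
          measurableSet_le measurable_const (measurable_id.dist measurable_const)
        have e0 : {ω | ε ≤ dist (W ω) (cc n)}
            = {ω | ε ≤ dist (W ω + φ (b (r n) t₀)) (φ a)} := by
          ext ω
          have : dist (W ω) (cc n) = dist (W ω + φ (b (r n) t₀)) (φ a) := by
            rw [Real.dist_eq, Real.dist_eq, hccdef]
            congr 1
            ring
          simp only [Set.mem_setOf_eq, this]
        have e1 : P {ω | ε ≤ dist (W ω + φ (b (r n) t₀)) (φ a)}
            = P.map (fun ω => W ω + φ (b (r n) t₀)) {x | ε ≤ dist x (φ a)} := by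
          rw [Measure.map_apply (Wmeas.add_const _) hS]; rfl
        have hmeasc : Measurable fun ω => φ (X (g n) ω) := measφ.comp (hXmeas _)
        have e2 : P {ω | ε ≤ dist (φ (X (g n) ω)) (φ a)}
            = P.map (fun ω => φ (X (g n) ω)) {x | ε ≤ dist x (φ a)} := by
          rw [Measure.map_apply hmeasc hS]; rfl
        rw [e0, e1, e2, hlawφ n]
      rw [show (fun n => P {ω | ε ≤ dist (W ω) (cc n)})
          = fun n => P {ω | ε ≤ dist (φ (X (g n) ω)) (φ a)} from funext hkey]
      have hbound : ∀ n, P {ω | ε ≤ dist (φ (X (g n) ω)) (φ a)}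
          ≤ P {ω | ε/Cy ≤ dist (X (g n) ω) a} := by
        intro n
        refine measure_mono fun ω hω => ?_
        simp only [Set.mem_setOf_eq] at hω ⊢
        rw [div_le_iff₀ hCy]
        calc ε ≤ dist (φ (X (g n) ω)) (φ a) := hω
          _ ≤ Cy * dist (X (g n) ω) a := hφdiff _ _
          _ = dist (X (g n) ω) a * Cy := by ring
      exact tendsto_of_tendsto_of_tendsto_of_le_of_le tendsto_const_nhds
        (probXa a ha atTop g hg (ε/Cy) (by positivity))
        (fun n => zero_le) hbound
    obtain ⟨vv, hvvt, hvva⟩ := concentrate P W cc hconc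
    -- contradiction with properness
    have hfull := hXp t₀ ht₀ y hy0 vv
    apply hfull
    have hSm : MeasurableSet {x : Fin m → ℝ | ∑ i, x i * y i = vv} :=
      measφ (measurableSet_singleton vv)
    rw [Measure.map_apply (hXmeas t₀) hSm]
    have hpre : X t₀ ⁻¹' {x | ∑ i, x i * y i = vv} = {ω | W ω = vv} := rfl
    rw [hpre]
    have hcompl : P {ω | W ω = vv}ᶜ = 0 := by
      have : {ω | W ω = vv}ᶜ = {ω | ¬ W ω = vv} := rfl
      rw [this]
      exact ae_iff.mp hvva
    have h2 : (1:ℝ≥0∞) ≤ P {ω | W ω = vv} := by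
      calc (1:ℝ≥0∞) = P univ := measure_univ.symm
        _ = P ({ω | W ω = vv} ∪ {ω | W ω = vv}ᶜ) := by rw [Set.union_compl_self]
        _ ≤ P {ω | W ω = vv} + P {ω | W ω = vv}ᶜ := measure_union_le _ _
        _ = P {ω | W ω = vv} := by rw [hcompl, add_zero]
    exact le_antisymm prob_le_one h2
  refine ⟨⟨forward, fun hDQ => ((backward hDQ).imp fun a h => h.2)⟩, ?_⟩
  -- continuity of the extended shift function
  intro a hDQ ha
  rintro ⟨r₀, t₀⟩ hp
  have hp' : (0:ℝ) ≤ r₀ := hp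
  rcases hp'.lt_or_eq with hr₀ | hr₀
  · -- interior case : r₀ > 0
    refine ContinuousAt.continuousWithinAt ?_
    have hev : ∀ᶠ q : ℝ × (Fin d → ℝ) in 𝓝 (r₀, t₀), 0 < q.1 :=
      (isOpen_lt continuous_const continuous_fst).mem_nhds hr₀
    refine (hbc r₀ hr₀ t₀).congr ?_
    filter_upwards [hev] with q hq
    exact (if_neg (ne_of_gt hq)).symm
  · -- boundary case : r₀ = 0
    have hr0 : r₀ = 0 := hr₀.symm
    subst hr0
    have hfp : (if ((0:ℝ), t₀).1 = 0 then a else b ((0:ℝ), t₀).1 ((0:ℝ), t₀).2) = a :=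
      if_pos rfl
    rw [ContinuousWithinAt, hfp]
    set l₂ := 𝓝[{q : ℝ × (Fin d → ℝ) | 0 < q.1}] ((0:ℝ), t₀) with hl₂def
    have hmono : 𝓝[{p : ℝ × (Fin d → ℝ) | 0 ≤ p.1}] ((0:ℝ), t₀)
        ≤ 𝓝[{q : ℝ × (Fin d → ℝ) | q.1 = 0}] ((0:ℝ), t₀) ⊔ l₂ := by
      rw [hl₂def, ← nhdsWithin_union]
      apply nhdsWithin_mono
      intro q hq
      have hq' : (0:ℝ) ≤ q.1 := hq
      rcases eq_or_lt_of_le hq' with h | h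
      · exact Or.inl h.symm
      · exact Or.inr h
    refine Tendsto.mono_left ?_ hmono
    rw [tendsto_sup]
    constructor
    · refine tendsto_const_nhds.congr' ?_
      filter_upwards [self_mem_nhdsWithin] with q hq
      exact (if_pos hq).symm
    · have hfst : Tendsto (fun q : ℝ × (Fin d → ℝ) => q.1) l₂ (𝓝[>] (0:ℝ)) := by
        rw [tendsto_nhdsWithin_iff]
        constructor
        · exact (continuous_fst.tendsto ((0:ℝ), t₀)).mono_left nhdsWithin_le_nhds
        · filter_upwards [self_mem_nhdsWithin] with q hq
          exact Set.mem_Ioi.mpr hq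
      have hsnd : Tendsto (fun q : ℝ × (Fin d → ℝ) => q.2) l₂ (𝓝 t₀) :=
        (continuous_snd.tendsto ((0:ℝ), t₀)).mono_left nhdsWithin_le_nhds
      have hconv : Tendsto (fun q : ℝ × (Fin d → ℝ) => b q.1 q.2) l₂ (𝓝 a) := by
        refine conv_of_laws P l₂ (fun q ω => X (mpow q.1 E *ᵥ q.2) ω)
          (fun q ω => mpow q.1 D *ᵥ X q.2 ω) (fun q => b q.1 q.2) a
          (fun q => hXmeas _) (fun q => ?_) ?_ ?_ ?_
        · exact ((continuous_const.matrix_mulVec continuous_id).measurable).comp (hXmeas q.2)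
        · filter_upwards [self_mem_nhdsWithin] with q hq
          exact law1 q.1 hq q.2
        · intro ε hε
          exact probXa a ha l₂ (fun q => mpow q.1 E *ᵥ q.2)
            (tendsto_mulVec_zero' (entSum_mpow_tendsto hE hfst) hsnd) ε hε
        · intro ε hε
          exact smallmat_prob P l₂ (fun q => mpow q.1 D)
            (entSum_mpow_tendsto hDQ hfst) (fun q => X q.2) (X t₀) (hXmeas t₀)
            ((hXc t₀ 1 one_pos).comp hsnd) ε hε
      refine hconv.congr' ?_
      filter_upwards [self_mem_nhdsWithin] with q hq
      exact (if_neg (ne_of_gt hq)).symm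
end

section
/- Let X = {X(t), t ∈ ℝ^d} be a stochastically continuous and proper random field with values in ℝ^m which is wide-sense operator-self-similar with time-variable scaling exponent E ∈ Q(ℝ^d), and let D ∈ M(ℝ^m) be such that {X(r^E t), t ∈ ℝ^d} ≡fdd {r^D X(t) + b_r(t), t ∈ ℝ^d} for all r > 0 with (r,t) ↦ b_r(t) continuous on (0,∞)×ℝ^d. Then the function b_r(t) is uniquely determined by E and D, and it satisfies the cocycle equation b_{r₁ r₂}(t) = b_{r₁}(r₂^E t) + r₁^D b_{r₂}(t) = b_{r₂}(r₁^E t) + r₂^D b_{r₁}(t) for all r₁, r₂ > 0 and t ∈ ℝ^d. -/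
open MeasureTheory Filter Matrix Topology Set
open scoped ENNReal NNReal

lemma mpow_mul' {n : ℕ} {r₁ r₂ : ℝ} (h₁ : 0 < r₁) (h₂ : 0 < r₂)
    (A : Matrix (Fin n) (Fin n) ℝ) :
    mpow (r₁ * r₂) A = mpow r₁ A * mpow r₂ A := by
  unfold mpow
  rw [Real.log_mul h₁.ne' h₂.ne', add_smul]
  exact Matrix.exp_add_of_commute _ _
    (((Commute.refl A).smul_left _).smul_right _)

lemma meas_mulVec' {m : ℕ} (M : Matrix (Fin m) (Fin m) ℝ) :
    Measurable (fun v : Fin m → ℝ => M *ᵥ v) := by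
  apply measurable_pi_lambda
  intro i
  simp only [Matrix.mulVec, dotProduct]
  exact Finset.measurable_sum _ fun j _ => (measurable_pi_apply j).const_mul _

lemma identFDD_single' {Ω : Type*} [MeasurableSpace Ω] (P : Measure Ω)
    {T β : Type*} [MeasurableSpace β] {Y Z : T → Ω → β}
    (h : ∀ (k : ℕ) (t : Fin k → T),
      P.map (fun ω i => Y (t i) ω) = P.map (fun ω i => Z (t i) ω))
    (hY : ∀ t, Measurable (Y t)) (hZ : ∀ t, Measurable (Z t)) (t : T) :
    P.map (Y t) = P.map (Z t) := by
  have h1 := h 1 (fun _ => t)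
  have e : Measurable fun v : Fin 1 → β => v 0 := measurable_pi_apply 0
  have mY : Measurable fun ω (_ : Fin 1) => Y t ω :=
    measurable_pi_lambda _ fun _ => hY t
  have mZ : Measurable fun ω (_ : Fin 1) => Z t ω :=
    measurable_pi_lambda _ fun _ => hZ t
  calc P.map (Y t) = (P.map (fun ω (_ : Fin 1) => Y t ω)).map (fun v => v 0) := by
        rw [Measure.map_map e mY]; rfl
    _ = (P.map (fun ω (_ : Fin 1) => Z t ω)).map (fun v => v 0) := by rw [h1]
    _ = P.map (Z t) := by rw [Measure.map_map e mZ]; rfl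

lemma shift_zero' {m : ℕ} (ν : Measure (Fin m → ℝ)) [IsProbabilityMeasure ν]
    (c : Fin m → ℝ) (h : ν.map (· + c) = ν) : c = 0 := by
  by_contra hc
  have hcn : 0 < ‖c‖ := norm_pos_iff.mpr hc
  have hmeas : ∀ a : Fin m → ℝ, Measurable (· + a) :=
    fun a => measurable_add_const a
  have hk : ∀ k : ℕ, ν.map (· + k • c) = ν := by
    intro k; induction k with
    | zero => simp
    | succ n ih =>
        have hco : (fun x : Fin m → ℝ => x + (n + 1) • c)
            = (fun x => x + c) ∘ (fun x => x + n • c) := by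
          funext x; rw [succ_nsmul, ← add_assoc]; rfl
        rw [hco, ← Measure.map_map (hmeas c) (hmeas _), ih, h]
  obtain ⟨R, hR⟩ : ∃ R : ℕ, (1 : ℝ≥0∞) / 2 < ν (Metric.closedBall 0 R) := by
    have hmono : Monotone fun n : ℕ => Metric.closedBall (0 : Fin m → ℝ) n :=
      fun a b hab => Metric.closedBall_subset_closedBall (Nat.cast_le.mpr hab)
    have hun : (⋃ n : ℕ, Metric.closedBall (0 : Fin m → ℝ) n) = univ := by
      ext x; simp only [mem_iUnion, Metric.mem_closedBall, mem_univ, iff_true]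
      obtain ⟨n, hn⟩ := exists_nat_ge (dist x 0)
      exact ⟨n, hn⟩
    have ht := tendsto_measure_iUnion_atTop (μ := ν) hmono
    rw [hun, measure_univ] at ht
    exact (ht.eventually (lt_mem_nhds (by norm_num : (1 : ℝ≥0∞) / 2 < 1))).exists
  obtain ⟨k, hknat⟩ := exists_nat_gt ((2 * (R : ℝ)) / ‖c‖)
  have hnorm : 2 * (R : ℝ) < k * ‖c‖ := (div_lt_iff₀ hcn).mp hknat
  set y : Fin m → ℝ := -(k • c) with hy
  have hdisj : Disjoint (Metric.closedBall (0 : Fin m → ℝ) R)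
      (Metric.closedBall y R) := by
    apply Metric.closedBall_disjoint_closedBall
    have : dist (0 : Fin m → ℝ) y = (k : ℝ) * ‖c‖ := by
      rw [hy, dist_eq_norm, zero_sub, neg_neg,
        ← Nat.cast_smul_eq_nsmul ℝ k c, norm_smul]
      simp
    rw [this]; linarith
  have h2 : ν (Metric.closedBall y R) = ν (Metric.closedBall 0 R) := by
    conv_rhs => rw [← hk k]
    rw [Measure.map_apply (hmeas _) Metric.isClosed_closedBall.measurableSet]
    congr 1
    ext x
    simp [Metric.mem_closedBall, dist_eq_norm, hy, sub_neg_eq_add]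
  have hsum : (1 : ℝ≥0∞) < ν (Metric.closedBall (0 : Fin m → ℝ) R ∪ Metric.closedBall y R) := by
    rw [measure_union hdisj Metric.isClosed_closedBall.measurableSet, h2]
    calc (1 : ℝ≥0∞) = 1 / 2 + 1 / 2 := (ENNReal.add_halves 1).symm
      _ < _ := ENNReal.add_lt_add hR hR
  exact absurd (prob_le_one (μ := ν)) (not_le.mpr hsum)

lemma shift_cancel' {Ω : Type*} [MeasurableSpace Ω] (P : Measure Ω)
    [IsProbabilityMeasure P] {m : ℕ} {Y : Ω → Fin m → ℝ} (hY : Measurable Y)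
    {a a' : Fin m → ℝ}
    (h : P.map (fun ω => Y ω + a) = P.map (fun ω => Y ω + a')) : a' = a := by
  have hYa : Measurable fun ω => Y ω + a := hY.add_const a
  have : IsProbabilityMeasure (P.map fun ω => Y ω + a) :=
    Measure.isProbabilityMeasure_map hYa.aemeasurable
  have hmap : (P.map fun ω => Y ω + a).map (· + (a' - a))
      = P.map fun ω => Y ω + a := by
    rw [Measure.map_map (measurable_add_const _) hYa]
    have : ((· + (a' - a)) ∘ fun ω => Y ω + a) = fun ω => Y ω + a' := by
      funext ω; show Y ω + a + (a' - a) = Y ω + a'; abel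
    rw [this, ← h]
  exact sub_eq_zero.mp (shift_zero' _ _ hmap)

/-- **Corollary 2.1.** The shift function `b_r(t)` of a w.o.s.s. field is uniquely
determined by `E` and `D` and satisfies the cocycle equation. -/
theorem woss_shift_unique_cocycle {d m : ℕ} (hd : 2 ≤ d) (hm : 2 ≤ m)
    {Ω : Type*} [MeasurableSpace Ω] (P : Measure Ω) [IsProbabilityMeasure P]
    (X : (Fin d → ℝ) → Ω → (Fin m → ℝ)) (hXmeas : ∀ t, Measurable (X t))
    (E : Matrix (Fin d) (Fin d) ℝ) (hE : E ∈ QSet d)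
    (hXc : StochContinuous P X) (hXp : ProperField P X)
    (hX : WOSS P X E)
    (D : Matrix (Fin m) (Fin m) ℝ) (hD : D ∈ MSet m)
    (b : ℝ → (Fin d → ℝ) → (Fin m → ℝ))
    (hbc : ∀ r : ℝ, 0 < r → ∀ t : Fin d → ℝ,
      ContinuousAt (fun p : ℝ × (Fin d → ℝ) => b p.1 p.2) (r, t))
    (hfdd : ∀ r : ℝ, 0 < r →
      IdentFDD P (fun t ω => X (mpow r E *ᵥ t) ω)
        (fun t ω => mpow r D *ᵥ X t ω + b r t)) :
    (∀ b' : ℝ → (Fin d → ℝ) → (Fin m → ℝ),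
      (∀ r : ℝ, 0 < r → ∀ t : Fin d → ℝ,
        ContinuousAt (fun p : ℝ × (Fin d → ℝ) => b' p.1 p.2) (r, t)) →
      (∀ r : ℝ, 0 < r →
        IdentFDD P (fun t ω => X (mpow r E *ᵥ t) ω)
          (fun t ω => mpow r D *ᵥ X t ω + b' r t)) →
      ∀ r : ℝ, 0 < r → ∀ t : Fin d → ℝ, b' r t = b r t) ∧
    (∀ r₁ r₂ : ℝ, 0 < r₁ → 0 < r₂ → ∀ t : Fin d → ℝ,
      b (r₁ * r₂) t = b r₁ (mpow r₂ E *ᵥ t) + mpow r₁ D *ᵥ b r₂ t ∧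
      b (r₁ * r₂) t = b r₂ (mpow r₁ E *ᵥ t) + mpow r₂ D *ᵥ b r₁ t) := by
  
  have hZ : ∀ (c : ℝ → (Fin d → ℝ) → (Fin m → ℝ)) (r : ℝ) (t : Fin d → ℝ),
      Measurable (fun ω => mpow r D *ᵥ X t ω + c r t) :=
    fun c r t => ((meas_mulVec' (mpow r D)).comp (hXmeas t)).add_const _
  have law1 : ∀ (c : ℝ → (Fin d → ℝ) → (Fin m → ℝ)),
      (∀ r : ℝ, 0 < r → IdentFDD P (fun t ω => X (mpow r E *ᵥ t) ω)
        (fun t ω => mpow r D *ᵥ X t ω + c r t)) →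
      ∀ r : ℝ, 0 < r → ∀ t, P.map (fun ω => X (mpow r E *ᵥ t) ω)
        = P.map (fun ω => mpow r D *ᵥ X t ω + c r t) :=
    by
    intro c hc r hr t
    exact identFDD_single' P (Y := fun u ω => X (mpow r E *ᵥ u) ω)
      (Z := fun u ω => mpow r D *ᵥ X u ω + c r u) (hc r hr)
      (fun u => hXmeas _) (fun u => hZ c r u) t
  constructor
  · intro b' hb'c hb'fdd r hr t
    have h := (law1 b hfdd r hr t).symm.trans (law1 b' hb'fdd r hr t)
    exact shift_cancel' P ((meas_mulVec' (mpow r D)).comp (hXmeas t)) h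
  · have key : ∀ r₁ r₂ : ℝ, 0 < r₁ → 0 < r₂ → ∀ t : Fin d → ℝ,
        b (r₁ * r₂) t = b r₁ (mpow r₂ E *ᵥ t) + mpow r₁ D *ᵥ b r₂ t := by
      intro r₁ r₂ h₁ h₂ t
      set s := mpow r₂ E *ᵥ t with hs
      have h12 : 0 < r₁ * r₂ := mul_pos h₁ h₂
      have e1 : mpow (r₁ * r₂) E *ᵥ t = mpow r₁ E *ᵥ s := by
        rw [hs, Matrix.mulVec_mulVec, ← mpow_mul' h₁ h₂]
      have g_meas : Measurable (fun v : Fin m → ℝ => mpow r₁ D *ᵥ v + b r₁ s) :=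
        (meas_mulVec' _).add_const _
      have step : P.map (fun ω => mpow (r₁ * r₂) D *ᵥ X t ω + b (r₁ * r₂) t)
          = P.map (fun ω => mpow (r₁ * r₂) D *ᵥ X t ω
              + (b r₁ s + mpow r₁ D *ᵥ b r₂ t)) := by
        calc P.map (fun ω => mpow (r₁ * r₂) D *ᵥ X t ω + b (r₁ * r₂) t)
            = P.map (fun ω => X (mpow (r₁ * r₂) E *ᵥ t) ω) :=
              (law1 b hfdd _ h12 t).symm
          _ = P.map (fun ω => mpow r₁ D *ᵥ X s ω + b r₁ s) := by
              rw [e1]; exact law1 b hfdd r₁ h₁ s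
          _ = (P.map (fun ω => X s ω)).map (fun v => mpow r₁ D *ᵥ v + b r₁ s) := by
              rw [Measure.map_map g_meas (hXmeas s)]; rfl
          _ = (P.map (fun ω => X (mpow r₂ E *ᵥ t) ω)).map
                (fun v => mpow r₁ D *ᵥ v + b r₁ s) := by rw [hs]
          _ = (P.map (fun ω => mpow r₂ D *ᵥ X t ω + b r₂ t)).map
                (fun v => mpow r₁ D *ᵥ v + b r₁ s) := by
              rw [law1 b hfdd r₂ h₂ t]
          _ = P.map (fun ω => mpow r₁ D *ᵥ (mpow r₂ D *ᵥ X t ω + b r₂ t) + b r₁ s) := by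
              rw [Measure.map_map g_meas (hZ b r₂ t)]; rfl
          _ = P.map (fun ω => mpow (r₁ * r₂) D *ᵥ X t ω
                + (b r₁ s + mpow r₁ D *ᵥ b r₂ t)) := by
              congr 1; funext ω
              rw [Matrix.mulVec_add, Matrix.mulVec_mulVec, ← mpow_mul' h₁ h₂]
              abel
      exact (shift_cancel' P ((meas_mulVec' _).comp (hXmeas t)) step).symm
    intro r₁ r₂ h₁ h₂ t
    refine ⟨key r₁ r₂ h₁ h₂ t, ?_⟩
    have h := key r₂ r₁ h₂ h₁ t
    rwa [mul_comm r₂ r₁] at h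
end

section
/- Let X = {X(t), t ∈ ℝ^d} be a stochastically continuous and proper ℝ^m-valued random field, let E ∈ Q(ℝ^d), and let G_r and G be as defined. Then G is a subgroup of Aut(ℝ^m): the identity matrix I belongs to G₁; if A ∈ G_r then A⁻¹ ∈ G_{1/r}; and if A ∈ G_r and B ∈ G_s then AB ∈ G_{sr}. -/
open MeasureTheory Filter Matrix Topology Set
open scoped ENNReal NNReal

section Helpers

lemma mpow_one_eq {n : ℕ} (A : Matrix (Fin n) (Fin n) ℝ) : mpow 1 A = 1 := by
  simp [mpow, Real.log_one, NormedSpace.exp_zero]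

lemma mpow_mul_mpow {n : ℕ} (A : Matrix (Fin n) (Fin n) ℝ) {r s : ℝ}
    (hr : 0 < r) (hs : 0 < s) : mpow r A * mpow s A = mpow (r * s) A := by
  unfold mpow
  rw [Real.log_mul hr.ne' hs.ne', add_smul]
  exact (Matrix.exp_add_of_commute _ _
    (((Commute.refl A).smul_left (Real.log r)).smul_right (Real.log s))).symm

lemma measurable_mulVec' {n m : ℕ} (M : Matrix (Fin m) (Fin n) ℝ) :
    Measurable fun v : Fin n → ℝ => M *ᵥ v := by
  have : Continuous fun v : Fin n → ℝ => Matrix.mulVecLin M v :=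
    (Matrix.mulVecLin M).continuous_of_finiteDimensional
  simpa using this.measurable

lemma map_eq_comp {Ω β γ : Type*} [MeasurableSpace Ω] [MeasurableSpace β] [MeasurableSpace γ]
    (P : MeasureTheory.Measure Ω) {f g : Ω → β} (hf : Measurable f) (hg : Measurable g)
    (h : P.map f = P.map g) {φ : β → γ} (hφ : Measurable φ) :
    P.map (fun ω => φ (f ω)) = P.map (fun ω => φ (g ω)) := by
  show P.map (φ ∘ f) = P.map (φ ∘ g)
  rw [← MeasureTheory.Measure.map_map hφ hf, ← MeasureTheory.Measure.map_map hφ hg, h]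

end Helpers

/-- **Lemma 3.1.** `G = ⋃_{r>0} G_r` is a subgroup of `Aut(ℝ^m)`: `I ∈ G₁`,
`A ∈ G_r ⟹ A⁻¹ ∈ G_{1/r}`, and `A ∈ G_r, B ∈ G_s ⟹ AB ∈ G_{sr}`. -/
theorem GSet_group {d m : ℕ} (hd : 2 ≤ d) (hm : 2 ≤ m)
    {Ω : Type*} [MeasurableSpace Ω] (P : Measure Ω) [IsProbabilityMeasure P]
    (X : (Fin d → ℝ) → Ω → (Fin m → ℝ)) (hXmeas : ∀ t, Measurable (X t))
    (E : Matrix (Fin d) (Fin d) ℝ) (hE : E ∈ QSet d)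
    (hXc : StochContinuous P X) (hXp : ProperField P X) :
    (1 : Matrix (Fin m) (Fin m) ℝ) ∈ GSet P X E 1 ∧
    (∀ r : ℝ, 0 < r → ∀ A ∈ GSet P X E r, A⁻¹ ∈ GSet P X E (1 / r)) ∧
    (∀ r s : ℝ, 0 < r → 0 < s →
      ∀ A ∈ GSet P X E r, ∀ B ∈ GSet P X E s, A * B ∈ GSet P X E (s * r)) := by
  refine ⟨⟨isUnit_one, fun _ => 0, ?_⟩, ?_, ?_⟩
  · intro k t
    congr 1
    funext ω i
    simp [mpow_one_eq, Matrix.one_mulVec]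
  · rintro r hr A ⟨hA, b, hb⟩
    have hdet : IsUnit A.det := (Matrix.isUnit_iff_isUnit_det A).mp hA
    have hAinv : IsUnit A⁻¹ := Matrix.isUnit_nonsing_inv_iff.mpr hA
    refine ⟨hAinv, fun u => -(A⁻¹ *ᵥ b (mpow (1 / r) E *ᵥ u)), ?_⟩
    intro k t
    set s : Fin k → (Fin d → ℝ) := fun i => mpow (1 / r) E *ᵥ t i with hs
    have hinv : mpow r E * mpow (1 / r) E = 1 := by
      rw [mpow_mul_mpow E hr (by positivity), mul_one_div_cancel hr.ne', mpow_one_eq]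
    have hf : Measurable (fun ω => fun i => X (mpow r E *ᵥ s i) ω) :=
      measurable_pi_lambda _ fun i => hXmeas _
    have hg : Measurable (fun ω => fun i => A *ᵥ X (s i) ω + b (s i)) :=
      measurable_pi_lambda _ fun i =>
        (((measurable_mulVec' A).comp (hXmeas _)).add_const _)
    have hφ : Measurable (fun v : Fin k → (Fin m → ℝ) =>
        fun i => A⁻¹ *ᵥ (v i - b (s i))) :=
      measurable_pi_lambda _ fun i =>
        (measurable_mulVec' A⁻¹).comp ((measurable_pi_apply i).sub measurable_const)
    have key := map_eq_comp P hf hg (hb k s) hφ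
    have e1 : (fun ω => fun i => A⁻¹ *ᵥ ((fun i => X (mpow r E *ᵥ s i) ω) i - b (s i)))
        = fun ω i => A⁻¹ *ᵥ X (t i) ω + -(A⁻¹ *ᵥ b (mpow (1 / r) E *ᵥ t i)) := by
      funext ω i
      have : mpow r E *ᵥ s i = t i := by
        rw [hs]; rw [Matrix.mulVec_mulVec, hinv, Matrix.one_mulVec]
      simp only [this, Matrix.mulVec_sub, sub_eq_add_neg, hs, Matrix.mulVec_add, Matrix.mulVec_neg,
        Matrix.mulVec_mulVec, hinv, Matrix.one_mulVec]
    have e2 : (fun ω => fun i => A⁻¹ *ᵥ ((fun i => A *ᵥ X (s i) ω + b (s i)) i - b (s i)))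
        = fun ω i => X (mpow (1 / r) E *ᵥ t i) ω := by
      funext ω i
      simp only [add_sub_cancel_right, Matrix.mulVec_mulVec,
        Matrix.nonsing_inv_mul A hdet, Matrix.one_mulVec, hs]
    rw [e1, e2] at key
    exact key.symm
  · rintro r u hr hu A ⟨hA, b, hb⟩ B ⟨hB, c, hc⟩
    refine ⟨hA.mul hB, fun w => A *ᵥ c w + b (mpow u E *ᵥ w), ?_⟩
    intro k t
    have step1 := hb k (fun i => mpow u E *ᵥ t i)
    have e0 : (fun ω => fun i => X (mpow r E *ᵥ (mpow u E *ᵥ t i)) ω)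
        = fun ω i => X (mpow (u * r) E *ᵥ t i) ω := by
      funext ω i
      rw [Matrix.mulVec_mulVec, mpow_mul_mpow E hr hu, mul_comm r u]
    rw [e0] at step1
    have hf : Measurable (fun ω => fun i => X (mpow u E *ᵥ t i) ω) :=
      measurable_pi_lambda _ fun i => hXmeas _
    have hg : Measurable (fun ω => fun i => B *ᵥ X (t i) ω + c (t i)) :=
      measurable_pi_lambda _ fun i =>
        (((measurable_mulVec' B).comp (hXmeas _)).add_const _)
    have hφ : Measurable (fun v : Fin k → (Fin m → ℝ) =>
        fun i => A *ᵥ v i + b (mpow u E *ᵥ t i)) :=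
      measurable_pi_lambda _ fun i =>
        ((measurable_mulVec' A).comp (measurable_pi_apply i)).add_const _
    have key := map_eq_comp P hf hg (hc k t) hφ
    have e1 : (fun ω => fun i => A *ᵥ (fun i => X (mpow u E *ᵥ t i) ω) i + b (mpow u E *ᵥ t i))
        = fun ω i => A *ᵥ X (mpow u E *ᵥ t i) ω + b (mpow u E *ᵥ t i) := rfl
    have e2 : (fun ω => fun i => A *ᵥ (fun i => B *ᵥ X (t i) ω + c (t i)) i + b (mpow u E *ᵥ t i))
        = fun ω i => (A * B) *ᵥ X (t i) ω + (A *ᵥ c (t i) + b (mpow u E *ᵥ t i)) := by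
      funext ω i
      simp only [Matrix.mulVec_add, Matrix.mulVec_mulVec, add_assoc]
    rw [e1, e2] at key
    exact step1.trans key
end

section
/- Let E ∈ Q(ℝ^d) and let τ be a radial part under E. Let φ : ℝ^d → [0,∞) be continuous, E-homogeneous, and satisfy φ(x) > 0 for all x ≠ 0. Then φ(0) = 0, the quantities M_φ := max_{θ∈Σ₀} φ(θ) and m_φ := min_{θ∈Σ₀} φ(θ) are finite and strictly positive, and m_φ τ(y) ≤ φ(y) ≤ M_φ τ(y) for all y ∈ ℝ^d. -/
open MeasureTheory Filter Matrix Topology Set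
open scoped ENNReal NNReal

theorem mpow_mul_mpow_inv {n : ℕ} (r : ℝ) (A : Matrix (Fin n) (Fin n) ℝ) :
    mpow r A * mpow r⁻¹ A = 1 := by
  have h : Commute (Real.log r • A) (Real.log r⁻¹ • A) :=
    ((Commute.refl A).smul_left _).smul_right _
  rw [mpow, mpow, ← Matrix.exp_add_of_commute _ _ h,
    ← add_smul, Real.log_inv, add_neg_cancel, zero_smul, NormedSpace.exp_zero]

/-- An `E`-homogeneous continuous function `φ`, positive off the origin, vanishes at `0`,
attains positive extrema `m_φ ≤ M_φ` on `Σ₀ = {τ = 1}`, and satisfies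
`m_φ τ(y) ≤ φ(y) ≤ M_φ τ(y)`. -/
theorem ehomogeneous_comparison {d : ℕ} (hd : 2 ≤ d)
    (E : Matrix (Fin d) (Fin d) ℝ) (hE : E ∈ QSet d)
    (τ : (Fin d → ℝ) → ℝ) (hτ : IsRadialPart E τ)
    (φ : (Fin d → ℝ) → ℝ) (hφc : Continuous φ) (hφnn : ∀ x, 0 ≤ φ x)
    (hφh : EHomogeneous E φ) (hφpos : ∀ x : Fin d → ℝ, x ≠ 0 → 0 < φ x) :
    φ 0 = 0 ∧
    ∃ Mφ mφ : ℝ,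
      IsGreatest (φ '' {x : Fin d → ℝ | τ x = 1}) Mφ ∧
      IsLeast (φ '' {x : Fin d → ℝ | τ x = 1}) mφ ∧
      0 < mφ ∧ 0 < Mφ ∧
      ∀ y : Fin d → ℝ, mφ * τ y ≤ φ y ∧ φ y ≤ Mφ * τ y := by
  haveI : Nonempty (Fin d) := ⟨⟨0, by omega⟩⟩
  -- Every nonzero `y` can be written as `(τ y)^E θ` with `θ ∈ Σ₀`.
  have hone : ∀ y : Fin d → ℝ, y ≠ 0 → ∃ θ : Fin d → ℝ, τ θ = 1 ∧ θ ≠ 0 ∧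
      φ y = τ y * φ θ := by
    intro y hy
    have hr : 0 < τ y := hτ.pos y hy
    refine ⟨mpow (τ y)⁻¹ E *ᵥ y, ?_, ?_, ?_⟩
    · rw [hτ.scaling _ (inv_pos.mpr hr), inv_mul_cancel₀ hr.ne']
    · intro h0
      apply hy
      have : mpow (τ y) E *ᵥ (mpow (τ y)⁻¹ E *ᵥ y) = y := by
        rw [Matrix.mulVec_mulVec, mpow_mul_mpow_inv, Matrix.one_mulVec]
      rw [h0, Matrix.mulVec_zero] at this
      exact this.symm
    · have hne : mpow (τ y)⁻¹ E *ᵥ y ≠ 0 := by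
        intro h0
        apply hy
        have : mpow (τ y) E *ᵥ (mpow (τ y)⁻¹ E *ᵥ y) = y := by
          rw [Matrix.mulVec_mulVec, mpow_mul_mpow_inv, Matrix.one_mulVec]
        rw [h0, Matrix.mulVec_zero] at this
        exact this.symm
      have := hφh (τ y) hr _ hne
      rw [Matrix.mulVec_mulVec, mpow_mul_mpow_inv, Matrix.one_mulVec] at this
      exact this
  -- `Σ₀` is nonempty.
  have hSne : ({x : Fin d → ℝ | τ x = 1}).Nonempty := by
    have hx0 : (Pi.single (⟨0, by omega⟩ : Fin d) (1 : ℝ) : Fin d → ℝ) ≠ 0 := by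
      intro h
      have := congrFun h ⟨0, by omega⟩
      simp at this
    obtain ⟨θ, hθ, -, -⟩ := hone _ hx0
    exact ⟨θ, hθ⟩
  -- extrema on the compact set `Σ₀`
  obtain ⟨θM, hθM, hmax⟩ := hτ.isCompact_sphere.exists_isMaxOn hSne hφc.continuousOn
  obtain ⟨θm, hθm, hmin⟩ := hτ.isCompact_sphere.exists_isMinOn hSne hφc.continuousOn
  set Mφ := φ θM with hMφ
  set mφ := φ θm with hmφ
  have hmpos : 0 < mφ := hφpos θm (fun h => hτ.zero_not_mem (h ▸ hθm))
  have hMpos : 0 < Mφ := hmpos.trans_le (hmax hθm)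
  -- comparison for nonzero `y`
  have hcomp : ∀ y : Fin d → ℝ, y ≠ 0 → mφ * τ y ≤ φ y ∧ φ y ≤ Mφ * τ y := by
    intro y hy
    obtain ⟨θ, hθ, -, hφy⟩ := hone y hy
    have hτy : 0 ≤ τ y := hτ.nonneg y
    constructor
    · rw [hφy, mul_comm (τ y) (φ θ)]
      exact mul_le_mul_of_nonneg_right (hmin hθ) hτy
    · rw [hφy, mul_comm (τ y) (φ θ)]
      exact mul_le_mul_of_nonneg_right (hmax hθ) hτy
  -- `φ 0 = 0` by squeezing along the punctured neighborhood of `0`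
  haveI : Nontrivial (Fin d → ℝ) := Function.nontrivial
  haveI : Filter.NeBot (𝓝[≠] (0 : Fin d → ℝ)) :=
    Module.punctured_nhds_neBot ℝ (Fin d → ℝ) 0
  have h1 : Tendsto φ (𝓝[≠] (0 : Fin d → ℝ)) (𝓝 (φ 0)) :=
    (hφc.tendsto 0).mono_left nhdsWithin_le_nhds
  have h2 : Tendsto φ (𝓝[≠] (0 : Fin d → ℝ)) (𝓝 0) := by
    have hupper : Tendsto (fun y => Mφ * τ y) (𝓝[≠] (0 : Fin d → ℝ)) (𝓝 0) := by
      have := (tendsto_const_nhds (x := Mφ)).mul hτ.tendsto_zero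
      rw [mul_zero] at this
      exact this.mono_left nhdsWithin_le_nhds
    refine tendsto_of_tendsto_of_tendsto_of_le_of_le' tendsto_const_nhds hupper ?_ ?_
    · exact Filter.Eventually.of_forall fun y => hφnn y
    · exact eventually_nhdsWithin_of_forall fun y hy => (hcomp y hy).2
  have hφ0 : φ 0 = 0 := tendsto_nhds_unique h1 h2
  refine ⟨hφ0, Mφ, mφ, ⟨⟨θM, hθM, rfl⟩, ?_⟩, ⟨⟨θm, hθm, rfl⟩, ?_⟩, hmpos, hMpos, ?_⟩
  · rintro _ ⟨x, hx, rfl⟩; exact hmax hx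
  · rintro _ ⟨x, hx, rfl⟩; exact hmin hx
  · intro y
    by_cases hy : y = 0
    · subst hy
      rw [hφ0, hτ.map_zero, mul_zero, mul_zero]
      exact ⟨le_refl 0, le_refl 0⟩
    · exact hcomp y hy
end
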